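/- arXiv:1004.0035 — 7 statements merged into one kernel-verified Lean document; each statement's English description precedes it below -/
import Mathlib

section
/- Suppose an abelian subgroup G of SL_d(ℤ) contains an element g whose action on 𝕋^d is irreducible (equivalently, whose characteristic polynomial is irreducible over ℚ). Then there exist: (i) a number field K of degree d; (ii) a group isomorphism φ from G onto a subgroup of the unit group U_K; (iii) a rank-d lattice Γ contained in K ⊂ K⊗_ℚℝ that is invariant under the multiplication action of every φ(h), h ∈ G; and a linear isomorphism ψ: ℝ^d → K⊗_ℚℝ ≅ ℝ^d such that ψ(ℤ^d) = Γ and ψ^{−1}∘×_{φ(h)}∘ψ = h for all h ∈ G. -/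
open scoped BigOperators NumberField
open NumberField

noncomputable section

namespace IrredAux

variable {d : ℕ} (i0 : Fin d) (A : Matrix (Fin d) (Fin d) ℚ) (P : Polynomial ℚ)
  [Fact (Irreducible P)] (hPA : Polynomial.aeval A P = 0)

def rho : AdjoinRoot P →ₐ[ℚ] Matrix (Fin d) (Fin d) ℚ :=
  Ideal.Quotient.liftₐ (Ideal.span {P}) (Polynomial.aeval A) (by
    intro q hq
    obtain ⟨c, rfl⟩ := Ideal.mem_span_singleton.mp hq
    rw [map_mul, hPA, zero_mul])

theorem rho_mk (q : Polynomial ℚ) :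
    rho A P hPA (AdjoinRoot.mk P q) = Polynomial.aeval A q := rfl

theorem rho_commute (B : Matrix (Fin d) (Fin d) ℚ) (hB : Commute A B) (t : AdjoinRoot P) :
    Commute (rho A P hPA t) B := by
  obtain ⟨q, rfl⟩ := AdjoinRoot.mk_surjective t
  rw [rho_mk]
  refine (Algebra.commute_of_mem_adjoin_singleton_of_commute (R := ℚ) ?_ hB.symm).symm
  rw [Algebra.adjoin_singleton_eq_range_aeval]
  exact ⟨q, rfl⟩

def v0 : Fin d → ℚ := Pi.single i0 1

def eps : AdjoinRoot P →ₗ[ℚ] (Fin d → ℚ) where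
  toFun t := (rho A P hPA t).mulVec (v0 i0)
  map_add' x y := by simp [map_add, Matrix.add_mulVec]
  map_smul' c x := by simp [map_smul, Matrix.smul_mulVec]

theorem eps_apply (t : AdjoinRoot P) : eps i0 A P hPA t = (rho A P hPA t).mulVec (v0 i0) := rfl

theorem eps_injective : Function.Injective (eps i0 A P hPA) := by
  rw [injective_iff_map_eq_zero]
  intro t ht
  by_contra h0
  have h1 : rho A P hPA t⁻¹ * rho A P hPA t = 1 := by
    rw [← map_mul, inv_mul_cancel₀ h0, map_one]
  have h2 : v0 i0 = (0 : Fin d → ℚ) := by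
    have := congrArg (fun w => (rho A P hPA t⁻¹).mulVec w) ht
    simpa [eps_apply, Matrix.mulVec_mulVec, h1, Matrix.one_mulVec] using this
  have := congrFun h2 i0
  simp [v0] at this

theorem eps_one : eps i0 A P hPA 1 = v0 i0 := by
  simp [eps_apply, map_one, Matrix.one_mulVec]

theorem Pne : P ≠ 0 := (Fact.out : Irreducible P).ne_zero

theorem finite_adjoinRoot : Module.Finite ℚ (AdjoinRoot P) :=
  (AdjoinRoot.powerBasis (Pne P)).finite

theorem finrankK (hdeg : P.natDegree = d) : Module.finrank ℚ (AdjoinRoot P) = d := by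
  rw [(AdjoinRoot.powerBasis (Pne P)).finrank, AdjoinRoot.powerBasis_dim, hdeg]

theorem eps_bijective (hdeg : P.natDegree = d) : Function.Bijective (eps i0 A P hPA) := by
  haveI := finite_adjoinRoot P
  have hinj := eps_injective i0 A P hPA
  refine ⟨hinj, ?_⟩
  rw [← LinearMap.injective_iff_surjective_of_finrank_eq_finrank
    (by rw [finrankK P hdeg, Module.finrank_fin_fun])]
  exact hinj

def eEquiv (hdeg : P.natDegree = d) : AdjoinRoot P ≃ₗ[ℚ] (Fin d → ℚ) :=
  LinearEquiv.ofBijective _ (eps_bijective i0 A P hPA hdeg)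

variable (hdeg : P.natDegree = d)

theorem eEquiv_apply (t : AdjoinRoot P) : eEquiv i0 A P hPA hdeg t = eps i0 A P hPA t := rfl

theorem eps_symm (w : Fin d → ℚ) :
    eps i0 A P hPA ((eEquiv i0 A P hPA hdeg).symm w) = w :=
  (eEquiv i0 A P hPA hdeg).apply_symm_apply w

/-- the element of K acting like B -/
def sOf (B : Matrix (Fin d) (Fin d) ℚ) : AdjoinRoot P :=
  (eEquiv i0 A P hPA hdeg).symm (B.mulVec (v0 i0))

theorem eps_sOf (B : Matrix (Fin d) (Fin d) ℚ) :
    eps i0 A P hPA (sOf i0 A P hPA hdeg B) = B.mulVec (v0 i0) := eps_symm _ _ _ _ _ _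

theorem key (B : Matrix (Fin d) (Fin d) ℚ) (hB : Commute A B) (t : AdjoinRoot P) :
    eps i0 A P hPA (sOf i0 A P hPA hdeg B * t) = B.mulVec (eps i0 A P hPA t) := by
  rw [mul_comm, eps_apply, map_mul, ← Matrix.mulVec_mulVec, ← eps_apply, eps_sOf,
    Matrix.mulVec_mulVec, (rho_commute A P hPA B hB t).eq, ← Matrix.mulVec_mulVec, ← eps_apply]

theorem sOf_one : sOf i0 A P hPA hdeg 1 = 1 :=
  eps_injective i0 A P hPA (by rw [eps_sOf, Matrix.one_mulVec, eps_one])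

theorem sOf_zero : sOf i0 A P hPA hdeg 0 = 0 :=
  eps_injective i0 A P hPA (by rw [eps_sOf, Matrix.zero_mulVec, map_zero])

theorem sOf_mul (B C : Matrix (Fin d) (Fin d) ℚ) (hB : Commute A B) (hC : Commute A C) :
    sOf i0 A P hPA hdeg (B * C) = sOf i0 A P hPA hdeg B * sOf i0 A P hPA hdeg C := by
  refine eps_injective i0 A P hPA ?_
  rw [eps_sOf, key i0 A P hPA hdeg B hB (sOf i0 A P hPA hdeg C), eps_sOf,
    Matrix.mulVec_mulVec]

theorem sOf_add (B C : Matrix (Fin d) (Fin d) ℚ) :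
    sOf i0 A P hPA hdeg (B + C) = sOf i0 A P hPA hdeg B + sOf i0 A P hPA hdeg C :=
  eps_injective i0 A P hPA (by rw [eps_sOf, Matrix.add_mulVec, map_add, eps_sOf, eps_sOf])

theorem sOf_smul (c : ℚ) (B : Matrix (Fin d) (Fin d) ℚ) :
    sOf i0 A P hPA hdeg (c • B) = c • sOf i0 A P hPA hdeg B :=
  eps_injective i0 A P hPA
    (by rw [eps_sOf, Matrix.smul_mulVec, map_smul, eps_sOf])

theorem sOf_pow (B : Matrix (Fin d) (Fin d) ℚ) (hB : Commute A B) (n : ℕ) :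
    sOf i0 A P hPA hdeg (B ^ n) = sOf i0 A P hPA hdeg B ^ n := by
  induction n with
  | zero => simpa using sOf_one i0 A P hPA hdeg
  | succ n ih =>
    rw [pow_succ, pow_succ, ← ih, sOf_mul i0 A P hPA hdeg _ _ (hB.pow_right n) hB]

theorem sOf_aeval (B : Matrix (Fin d) (Fin d) ℚ) (hB : Commute A B) (p : Polynomial ℚ) :
    Polynomial.aeval (sOf i0 A P hPA hdeg B) p = sOf i0 A P hPA hdeg (Polynomial.aeval B p) := by
  induction p using Polynomial.induction_on' with
  | add p q hp hq =>
    rw [map_add, map_add, hp, hq, sOf_add]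
  | monomial n c =>
    rw [Polynomial.aeval_monomial, Polynomial.aeval_monomial, ← Algebra.smul_def,
      ← Algebra.smul_def, sOf_smul, sOf_pow i0 A P hPA hdeg B hB]

theorem sOf_isIntegral (B : Matrix (Fin d) (Fin d) ℚ) (hB : Commute A B)
    (M : Matrix (Fin d) (Fin d) ℤ) (hM : M.map (Int.cast : ℤ → ℚ) = B) :
    IsIntegral ℤ (sOf i0 A P hPA hdeg B) := by
  have h1 : Polynomial.aeval B (M.charpoly.map (Int.castRingHom ℚ)) = 0 := by
    rw [← Matrix.charpoly_map M (Int.castRingHom ℚ)]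
    rw [show M.map ⇑(Int.castRingHom ℚ) = B from hM, Matrix.aeval_self_charpoly]
  have h2 := sOf_aeval i0 A P hPA hdeg B hB (M.charpoly.map (Int.castRingHom ℚ))
  rw [h1, sOf_zero] at h2
  refine ⟨M.charpoly, M.charpoly_monic, ?_⟩
  rw [← Polynomial.aeval_def, ← Polynomial.aeval_map_algebraMap ℚ, algebraMap_int_eq]
  exact h2

theorem sOf_injective (B C : Matrix (Fin d) (Fin d) ℚ) (hB : Commute A B) (hC : Commute A C)
    (h : sOf i0 A P hPA hdeg B = sOf i0 A P hPA hdeg C) : B = C := by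
  have hvec : ∀ w : Fin d → ℚ, B.mulVec w = C.mulVec w := by
    intro w
    obtain ⟨t, rfl⟩ := (eps_bijective i0 A P hPA hdeg).2 w
    rw [← key i0 A P hPA hdeg B hB t, ← key i0 A P hPA hdeg C hC t, h]
  ext k j
  have := congrFun (hvec (Pi.single j 1)) k
  simpa [Matrix.mulVec_single] using this

theorem charZeroK : CharZero (AdjoinRoot P) :=
  charZero_of_injective_algebraMap (algebraMap ℚ (AdjoinRoot P)).injective

theorem numberFieldK : NumberField (AdjoinRoot P) := by
  haveI := charZeroK P
  haveI := finite_adjoinRoot P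
  exact ⟨⟩

variable [NumberField (AdjoinRoot P)]

theorem mixedEmbedding_ratsmul (c : ℚ) (t : AdjoinRoot P) :
    mixedEmbedding (AdjoinRoot P) (c • t) = (c : ℝ) • mixedEmbedding (AdjoinRoot P) t := by
  rw [map_rat_smul (mixedEmbedding (AdjoinRoot P)) c t, ratCast_smul_eq ℝ ℚ]
  simp

def qel (i : Fin d) : AdjoinRoot P := (eEquiv i0 A P hPA hdeg).symm (Pi.single i 1)

theorem eps_qel (i : Fin d) : eps i0 A P hPA (qel i0 A P hPA hdeg i) = Pi.single i 1 :=
  eps_symm i0 A P hPA hdeg _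

def Lmap : EuclideanSpace ℝ (Fin d) →ₗ[ℝ] mixedEmbedding.mixedSpace (AdjoinRoot P) where
  toFun v := ∑ i, v i • mixedEmbedding (AdjoinRoot P) (qel i0 A P hPA hdeg i)
  map_add' a b := by
    simp only [PiLp.add_apply, add_smul, Finset.sum_add_distrib]
  map_smul' c a := by
    simp only [PiLp.smul_apply, smul_eq_mul, RingHom.id_apply, Finset.smul_sum, smul_smul]

theorem Lmap_apply (v : EuclideanSpace ℝ (Fin d)) :
    Lmap i0 A P hPA hdeg v = ∑ i, v i • mixedEmbedding (AdjoinRoot P) (qel i0 A P hPA hdeg i) :=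
  rfl

def basisK : Module.Basis (Fin d) ℚ (AdjoinRoot P) :=
  (Pi.basisFun ℚ (Fin d)).map (eEquiv i0 A P hPA hdeg).symm

theorem basisK_apply (i : Fin d) : basisK i0 A P hPA hdeg i = qel i0 A P hPA hdeg i := by
  simp [basisK, qel, Module.Basis.map_apply]

theorem embed_eq_Lmap (t : AdjoinRoot P) :
    mixedEmbedding (AdjoinRoot P) t
      = Lmap i0 A P hPA hdeg (WithLp.toLp 2 (fun i => (((basisK i0 A P hPA hdeg).repr t i : ℚ) : ℝ))) := by
  conv_lhs => rw [← (basisK i0 A P hPA hdeg).sum_repr t]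
  rw [map_sum, Lmap_apply]
  refine Finset.sum_congr rfl fun i _ => ?_
  rw [basisK_apply, mixedEmbedding_ratsmul]

theorem Lmap_surjective : Function.Surjective (Lmap i0 A P hPA hdeg) := by
  rw [← LinearMap.range_eq_top]
  refine top_unique ?_
  rw [← (mixedEmbedding.latticeBasis (AdjoinRoot P)).span_eq]
  refine Submodule.span_le.mpr ?_
  rintro x ⟨i, rfl⟩
  rw [mixedEmbedding.latticeBasis_apply, embed_eq_Lmap]
  exact LinearMap.mem_range_self _ _

theorem Lmap_bijective : Function.Bijective (Lmap i0 A P hPA hdeg) := by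
  have hsurj := Lmap_surjective i0 A P hPA hdeg
  refine ⟨?_, hsurj⟩
  rw [LinearMap.injective_iff_surjective_of_finrank_eq_finrank
    (by rw [finrank_euclideanSpace_fin, mixedEmbedding.finrank, finrankK P hdeg])]
  exact hsurj

def Psi : EuclideanSpace ℝ (Fin d) ≃ₗ[ℝ] mixedEmbedding.mixedSpace (AdjoinRoot P) :=
  LinearEquiv.ofBijective _ (Lmap_bijective i0 A P hPA hdeg)

theorem Psi_apply (v : EuclideanSpace ℝ (Fin d)) :
    Psi i0 A P hPA hdeg v = Lmap i0 A P hPA hdeg v := rfl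

theorem sOf_mul_qel (B : Matrix (Fin d) (Fin d) ℚ) (hB : Commute A B) (i : Fin d) :
    sOf i0 A P hPA hdeg B * qel i0 A P hPA hdeg i
      = ∑ j, B j i • qel i0 A P hPA hdeg j := by
  refine eps_injective i0 A P hPA ?_
  rw [key i0 A P hPA hdeg B hB, eps_qel, map_sum]
  funext k
  simp only [Matrix.mulVec_single, mul_one, map_smul, eps_qel, Finset.sum_apply,
    Pi.smul_apply, Pi.single_apply, smul_eq_mul, mul_ite, mul_one, mul_zero]
  rw [Finset.sum_ite_eq (Finset.univ : Finset (Fin d)) k (fun x => B x i)]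
  simp

theorem Lconj (B : Matrix (Fin d) (Fin d) ℚ) (hB : Commute A B) (v : EuclideanSpace ℝ (Fin d)) :
    mixedEmbedding (AdjoinRoot P) (sOf i0 A P hPA hdeg B) * Lmap i0 A P hPA hdeg v
      = Lmap i0 A P hPA hdeg (WithLp.toLp 2 (fun j => ∑ i, (B j i : ℝ) * v i)) := by
  rw [Lmap_apply, Finset.mul_sum]
  have step : ∀ i : Fin d,
      mixedEmbedding (AdjoinRoot P) (sOf i0 A P hPA hdeg B)
        * (v i • mixedEmbedding (AdjoinRoot P) (qel i0 A P hPA hdeg i))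
      = ∑ j, (v i * (B j i : ℝ)) • mixedEmbedding (AdjoinRoot P) (qel i0 A P hPA hdeg j) := by
    intro i
    rw [mul_smul_comm, ← map_mul, sOf_mul_qel i0 A P hPA hdeg B hB i, map_sum]
    rw [Finset.smul_sum]
    refine Finset.sum_congr rfl fun j _ => ?_
    rw [mixedEmbedding_ratsmul, smul_smul]
  rw [Finset.sum_congr rfl fun i _ => step i, Finset.sum_comm, Lmap_apply]
  refine Finset.sum_congr rfl fun j _ => ?_
  rw [Finset.sum_smul]
  refine Finset.sum_congr rfl fun i _ => ?_
  rw [mul_comm]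

end IrredAux


abbrev SLZ (d : ℕ) := Matrix.SpecialLinearGroup (Fin d) ℤ

def intLattice (d : ℕ) : AddSubgroup (EuclideanSpace ℝ (Fin d)) where
  carrier := {v | ∀ i, ∃ n : ℤ, v i = (n : ℝ)}
  zero_mem' := fun i => ⟨0, by simp⟩
  add_mem' := by
    intro a b ha hb i
    obtain ⟨n, hn⟩ := ha i
    obtain ⟨m, hm⟩ := hb i
    exact ⟨n + m, by push_cast [← hn, ← hm]; rfl⟩
  neg_mem' := by
    intro a ha i
    obtain ⟨n, hn⟩ := ha i
    exact ⟨-n, by push_cast [← hn]; rfl⟩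

def matVec {d : ℕ} (A : Matrix (Fin d) (Fin d) ℤ) (v : EuclideanSpace ℝ (Fin d)) :
    EuclideanSpace ℝ (Fin d) := WithLp.toLp 2 (fun i => ∑ j, (A i j : ℝ) * v j)

def IrreducibleMat {d : ℕ} (A : SLZ d) : Prop :=
  Irreducible (((A : Matrix (Fin d) (Fin d) ℤ).charpoly).map (Int.castRingHom ℚ))

def TotallyIrreducibleMat {d : ℕ} (A : SLZ d) : Prop :=
  ∀ n : ℕ, 0 < n → IrreducibleMat (A ^ n)

/-- The conjugation data of Proposition 2.15: a number field `K` of degree `d`, an isomorphism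
`φ` of `G` with a group of units of `K`, a `φ(G)`-invariant lattice `Γ` contained in
`K ⊂ K ⊗_ℚ ℝ ≅ ℝ^{r₁} × ℂ^{r₂}` (the identification being the canonical embedding), and a
linear conjugation `ψ` between the `G`-action on `ℝ^d` and the multiplication action of
`φ(G)` on `K ⊗_ℚ ℝ`. -/
structure IrredConjData (d : ℕ) (G : Subgroup (SLZ d)) where
  K : Type
  [fieldK : Field K]
  [nfK : NumberField K]
  deg : Module.finrank ℚ K = d
  φ : ↥G →* (𝓞 K)ˣ
  φinj : Function.Injective φ
  Γ : AddSubgroup (NumberField.mixedEmbedding.mixedSpace K)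
  ΓinK : ∀ x ∈ Γ, ∃ t : K, NumberField.mixedEmbedding K t = x
  Γinv : ∀ (g : ↥G), ∀ x ∈ Γ,
    NumberField.mixedEmbedding K (algebraMap (𝓞 K) K ((φ g : (𝓞 K)ˣ) : 𝓞 K)) * x ∈ Γ
  ψ : EuclideanSpace ℝ (Fin d) ≃ₗ[ℝ] NumberField.mixedEmbedding.mixedSpace K
  ψlat : ∀ v : EuclideanSpace ℝ (Fin d), ψ v ∈ Γ ↔ v ∈ intLattice d
  conj : ∀ (g : ↥G) (v : EuclideanSpace ℝ (Fin d)),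
    ψ.symm (NumberField.mixedEmbedding K (algebraMap (𝓞 K) K ((φ g : (𝓞 K)ˣ) : 𝓞 K)) * ψ v)
      = matVec ((g : SLZ d) : Matrix (Fin d) (Fin d) ℤ) v

/-- **Conjugating an abelian irreducible action to a unit action on `K ⊗_ℚ ℝ`**
(Proposition 2.15 of the paper). If an abelian subgroup `G ≤ SL_d(ℤ)` contains an element
acting irreducibly on `𝕋^d`, then there exist a degree-`d` number field `K`, an isomorphism
`φ` from `G` onto a subgroup of `U_K`, a rank-`d` lattice `Γ ⊂ K ⊂ K ⊗_ℚ ℝ` invariant under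
multiplication by `φ(G)`, and a linear isomorphism `ψ : ℝ^d → K ⊗_ℚ ℝ` with `ψ(ℤ^d) = Γ`
conjugating the `G`-action to the multiplication action of `φ(G)`. -/
theorem conjugation_to_unit_action (d : ℕ) (G : Subgroup (SLZ d))
    (hab : ∀ a ∈ G, ∀ b ∈ G, a * b = b * a)
    (hirr : ∃ g ∈ G, IrreducibleMat g) :
    Nonempty (IrredConjData d G) := by
  classical
  obtain ⟨g, hgG, hg⟩ := hirr
  have hg' : Irreducible (((g : Matrix (Fin d) (Fin d) ℤ).charpoly).map (Int.castRingHom ℚ)) := hg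
  set M0 : Matrix (Fin d) (Fin d) ℤ := (g : Matrix (Fin d) (Fin d) ℤ) with hM0
  set P : Polynomial ℚ := M0.charpoly.map (Int.castRingHom ℚ) with hP
  haveI : Fact (Irreducible P) := ⟨hg'⟩
  have hmonic : P.Monic := M0.charpoly_monic.map _
  have hdeg : P.natDegree = d := by
    rw [hP, Polynomial.Monic.natDegree_map M0.charpoly_monic,
      Matrix.charpoly_natDegree_eq_dim, Fintype.card_fin]
  have hd0 : 0 < d := by
    rcases Nat.eq_zero_or_pos d with h | h
    · exfalso
      apply hg'.not_isUnit
      have : P = 1 := hmonic.natDegree_eq_zero.mp (by rw [hdeg, h])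
      rw [this]; exact isUnit_one
    · exact h
  set i0 : Fin d := ⟨0, hd0⟩
  set A : Matrix (Fin d) (Fin d) ℚ := M0.map ⇑(Int.castRingHom ℚ) with hA
  have hPA : Polynomial.aeval A P = 0 := by
    rw [hP, ← Matrix.charpoly_map M0 (Int.castRingHom ℚ), ← hA, Matrix.aeval_self_charpoly]
  haveI hNF : NumberField (AdjoinRoot P) := IrredAux.numberFieldK P
  -- matrices of group elements
  set MZ : ↥G → Matrix (Fin d) (Fin d) ℤ := fun h => ((h : SLZ d) : Matrix (Fin d) (Fin d) ℤ)
    with hMZ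
  set MQ : ↥G → Matrix (Fin d) (Fin d) ℚ := fun h => (MZ h).map ⇑(Int.castRingHom ℚ) with hMQ
  have hcomm : ∀ h : ↥G, Commute A (MQ h) := by
    intro h
    have h1 : g * (h : SLZ d) = (h : SLZ d) * g := hab g hgG _ h.2
    have h2 : M0 * MZ h = MZ h * M0 := by
      have := congrArg (fun x : SLZ d => (x : Matrix (Fin d) (Fin d) ℤ)) h1
      simpa [hMZ, hM0] using this
    have h3 := congrArg (fun m : Matrix (Fin d) (Fin d) ℤ => m.map ⇑(Int.castRingHom ℚ)) h2
    simp only [Matrix.map_mul] at h3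
    exact h3
  have hMZmul : ∀ a b : ↥G, MZ (a * b) = MZ a * MZ b := by
    intro a b
    simp [hMZ]
  have hMQmul : ∀ a b : ↥G, MQ (a * b) = MQ a * MQ b := by
    intro a b
    rw [hMQ]; dsimp only
    rw [hMZmul, Matrix.map_mul]
  have hMZone : MZ 1 = 1 := by simp [hMZ]
  have hMQone : MQ 1 = 1 := by
    rw [hMQ]; dsimp only
    rw [hMZone]
    exact Matrix.map_one _ (map_zero _) (map_one _)
  set s : ↥G → AdjoinRoot P := fun h => IrredAux.sOf i0 A P hPA hdeg (MQ h) with hs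
  have hs_mul : ∀ a b : ↥G, s (a * b) = s a * s b := by
    intro a b
    rw [hs]; dsimp only
    rw [hMQmul, IrredAux.sOf_mul i0 A P hPA hdeg _ _ (hcomm a) (hcomm b)]
  have hs_one : s 1 = 1 := by
    rw [hs]; dsimp only
    rw [hMQone, IrredAux.sOf_one]
  have hint : ∀ h : ↥G, IsIntegral ℤ (s h) := fun h =>
    IrredAux.sOf_isIntegral i0 A P hPA hdeg (MQ h) (hcomm h) (MZ h) rfl
  have hsinv : ∀ h : ↥G, s h * s h⁻¹ = 1 := by
    intro h
    rw [← hs_mul, mul_inv_cancel, hs_one]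
  -- the monoid hom into units of the ring of integers
  set Φ : ↥G → (𝓞 (AdjoinRoot P))ˣ := fun h =>
    { val := ⟨s h, hint h⟩
      inv := ⟨s h⁻¹, hint h⁻¹⟩
      val_inv := Subtype.ext (hsinv h)
      inv_val := Subtype.ext (by show s h⁻¹ * s h = 1; rw [mul_comm]; exact hsinv h) } with hΦ
  have hΦmul : ∀ a b : ↥G, Φ (a * b) = Φ a * Φ b := by
    intro a b
    exact Units.ext (Subtype.ext (hs_mul a b))
  set φ : ↥G →* (𝓞 (AdjoinRoot P))ˣ := MonoidHom.mk' Φ hΦmul with hφ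
  have hφval : ∀ h : ↥G, algebraMap (𝓞 (AdjoinRoot P)) (AdjoinRoot P) ((φ h : (𝓞 (AdjoinRoot P))ˣ) : 𝓞 (AdjoinRoot P)) = s h := fun h => rfl
  have hφinj : Function.Injective φ := by
    intro a b h
    have h1 : s a = s b := by
      have := congrArg (fun u : (𝓞 (AdjoinRoot P))ˣ =>
        algebraMap (𝓞 (AdjoinRoot P)) (AdjoinRoot P) (u : 𝓞 (AdjoinRoot P))) h
      simpa [hφval] using this
    have h2 : MQ a = MQ b :=
      IrredAux.sOf_injective i0 A P hPA hdeg _ _ (hcomm a) (hcomm b) h1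
    have h3 : MZ a = MZ b := by
      ext i j
      have := congrArg (fun m : Matrix (Fin d) (Fin d) ℚ => m i j) h2
      simpa [hMQ, Matrix.map_apply] using this
    exact Subtype.ext (Subtype.ext h3)
  -- the linear conjugation
  set ψ := IrredAux.Psi i0 A P hPA hdeg with hψ
  set Γ : AddSubgroup (NumberField.mixedEmbedding.mixedSpace (AdjoinRoot P)) :=
    AddSubgroup.map ψ.toLinearMap.toAddMonoidHom (intLattice d) with hΓ
  have hmemΓ : ∀ x, x ∈ Γ ↔ ∃ v ∈ intLattice d, ψ v = x := by
    intro x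
    simp [hΓ, AddSubgroup.mem_map]
  have hψlat : ∀ v : EuclideanSpace ℝ (Fin d), ψ v ∈ Γ ↔ v ∈ intLattice d := by
    intro v
    rw [hmemΓ]
    constructor
    · rintro ⟨w, hw, hwe⟩
      rwa [← ψ.injective hwe]
    · intro hv; exact ⟨v, hv, rfl⟩
  -- the conjugation identity at the level of Lmap
  have hconj : ∀ (h : ↥G) (v : EuclideanSpace ℝ (Fin d)),
      NumberField.mixedEmbedding (AdjoinRoot P) (s h) * ψ v
        = ψ (matVec (MZ h) v) := by
    intro h v
    rw [hψ, IrredAux.Psi_apply, IrredAux.Psi_apply,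
      IrredAux.Lconj i0 A P hPA hdeg (MQ h) (hcomm h) v]
    congr 1
  -- integer vectors are preserved by integer matrices
  have hmatVec_int : ∀ (h : ↥G) (v : EuclideanSpace ℝ (Fin d)), v ∈ intLattice d →
      matVec (MZ h) v ∈ intLattice d := by
    intro h v hv j
    choose n hn using hv
    refine ⟨∑ i, MZ h j i * n i, ?_⟩
    simp only [matVec]
    push_cast
    refine Finset.sum_congr rfl fun i _ => ?_
    rw [hn i]
  refine ⟨{ K := AdjoinRoot P, fieldK := inferInstance, nfK := hNF,
            deg := IrredAux.finrankK P hdeg, φ := φ, φinj := hφinj, Γ := Γ, ψ := ψ,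
            ΓinK := ?_, Γinv := ?_, ψlat := hψlat, conj := ?_ }⟩
  · -- ΓinK
    intro x hx
    rw [hmemΓ] at hx
    obtain ⟨v, hv, rfl⟩ := hx
    choose n hn using hv
    refine ⟨∑ i, (n i : ℚ) • IrredAux.qel i0 A P hPA hdeg i, ?_⟩
    rw [map_sum, hψ, IrredAux.Psi_apply, IrredAux.Lmap_apply]
    refine Finset.sum_congr rfl fun i _ => ?_
    rw [IrredAux.mixedEmbedding_ratsmul, hn i]
    norm_num
  · -- Γinv
    intro h x hx
    rw [hmemΓ] at hx
    obtain ⟨v, hv, rfl⟩ := hx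
    rw [hφval, hconj]
    exact (hψlat _).mpr (hmatVec_int h v hv)
  · -- conj
    intro h v
    rw [hφval, hconj, ψ.symm_apply_apply]


end
end

section
/- Let G be an abelian subgroup of SL_d(ℤ) containing an element whose characteristic polynomial is irreducible over ℚ, and assume in addition that there is no abelian subgroup G₁ of SL_d(ℤ) containing G with rank(G₁) > rank(G) (torsion-free rank). Then the number field K, isomorphism φ, lattice Γ, and conjugating map ψ of the preceding construction can be chosen so that φ(G) is a finite-index subgroup of the full unit group U_K; in particular rank(G) = rank(U_K). -/
set_option maxSynthPendingDepth 2
set_option synthInstance.maxHeartbeats 400000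
set_option maxHeartbeats 1000000


open scoped BigOperators NumberField
open NumberField

noncomputable section

attribute [instance] IrredConjData.fieldK IrredConjData.nfK

/-- A family of elements of a group is multiplicatively independent if no nontrivial integer
power combination of its members is the identity. -/
def MulIndepFam {H : Type*} [Group H] {k : ℕ} (f : Fin k → H) : Prop :=
  ∀ c : Fin k → ℤ, (List.ofFn fun i => f i ^ c i).prod = 1 → c = 0

/-- The (torsion-free) rank of a subgroup is at least `k`. -/
def RankGE {H : Type*} [Group H] (G : Subgroup H) (k : ℕ) : Prop :=
  ∃ f : Fin k → H, (∀ i, f i ∈ G) ∧ MulIndepFam f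

/-! ### Generic lemmas -/

section Generic

variable {G₀ H₀ : Type*} [Group G₀] [Group H₀]

theorem hom_ofFn_prod (f : G₀ →* H₀) {k : ℕ} (x : Fin k → G₀) (c : Fin k → ℤ) :
    f ((List.ofFn fun i => x i ^ c i).prod) = (List.ofFn fun i => f (x i) ^ c i).prod := by
  rw [← List.prod_hom _ f, List.map_ofFn]
  simp [Function.comp_def, map_zpow]

theorem MulIndepFam.of_comp (f : G₀ →* H₀) {k : ℕ} {x : Fin k → G₀}
    (h : MulIndepFam fun i => f (x i)) : MulIndepFam x := by
  intro c hc
  exact h c (by rw [← hom_ofFn_prod, hc, map_one])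

theorem MulIndepFam.map (f : G₀ →* H₀) (hf : Function.Injective f) {k : ℕ} {x : Fin k → G₀}
    (h : MulIndepFam x) : MulIndepFam fun i => f (x i) := by
  intro c hc
  refine h c (hf ?_)
  rw [hom_ofFn_prod, hc, map_one]

/-- membership in the ℤ-span of a ℚ-basis is equivalent to integrality of all coordinates. -/
theorem mem_int_span_iff {V ι : Type*} [Fintype ι] [AddCommGroup V] [Module ℚ V]
    (c : Module.Basis ι ℚ V) (x : V) :
    x ∈ Submodule.span ℤ (Set.range c) ↔ ∀ i, ∃ n : ℤ, c.repr x i = n := by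
  constructor
  · intro hx
    induction hx using Submodule.span_induction with
    | mem y hy =>
      obtain ⟨j, rfl⟩ := hy
      intro i
      by_cases h : i = j
      · exact ⟨1, by simp [h]⟩
      · exact ⟨0, by simp [Module.Basis.repr_self, Finsupp.single_apply, Ne.symm h]⟩
    | zero => intro i; exact ⟨0, by simp⟩
    | add y z _ _ hy hz =>
      intro i
      obtain ⟨n, hn⟩ := hy i
      obtain ⟨m, hm⟩ := hz i
      exact ⟨n + m, by simp [hn, hm]⟩
    | smul a y _ hy =>
      intro i
      obtain ⟨n, hn⟩ := hy i
      exact ⟨a * n, by simp [hn, Int.cast_mul]⟩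
  · intro h
    choose n hn using h
    have : x = ∑ i, (n i : ℚ) • c i := by
      conv_lhs => rw [← Module.Basis.sum_repr c x]
      exact Finset.sum_congr rfl fun i _ => by rw [hn i]
    rw [this]
    refine Submodule.sum_mem _ fun i _ => ?_
    rw [Int.cast_smul_eq_zsmul]
    exact Submodule.smul_mem _ _ (Submodule.subset_span ⟨i, rfl⟩)

theorem int_mul_rat_den_dvd {n : ℤ} (r : ℚ) (h : (r.den : ℤ) ∣ n) :
    ∃ z : ℤ, (n : ℚ) * r = z := by
  obtain ⟨t, rfl⟩ := h
  refine ⟨t * r.num, ?_⟩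
  push_cast
  rw [mul_assoc, mul_comm (r.den : ℚ), mul_assoc, Rat.mul_den_eq_num]

/-- clearing denominators with respect to a rational basis -/
theorem exists_int_smul_coords {V ι : Type*} [Fintype ι] [AddCommGroup V] [Module ℚ V]
    (c : Module.Basis ι ℚ V) (x : V) :
    ∃ n : ℤ, n ≠ 0 ∧ ∀ i, ∃ z : ℤ, c.repr ((n : ℤ) • x) i = z := by
  classical
  refine ⟨∏ i, ((c.repr x i).den : ℤ), ?_, ?_⟩
  · exact Finset.prod_ne_zero_iff.mpr fun i _ => Int.natCast_ne_zero.mpr (Rat.den_ne_zero _)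
  · intro i
    have : c.repr ((∏ i, ((c.repr x i).den : ℤ) : ℤ) • x) i
        = ((∏ i, ((c.repr x i).den : ℤ) : ℤ) : ℚ) * c.repr x i := by
      rw [map_zsmul]
      simp [zsmul_eq_mul]
    rw [this]
    exact int_mul_rat_den_dvd _ (Finset.dvd_prod_of_mem _ (Finset.mem_univ i))

end Generic

/-! ### unit group lemmas -/

section UnitsLemmas

variable (K : Type*) [Field K] [NumberField K]

theorem rankge_top_units : RankGE (⊤ : Subgroup (𝓞 K)ˣ) (NumberField.Units.rank K) := by
  refine ⟨Units.fundSystem K, fun _ => Subgroup.mem_top _, ?_⟩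
  intro c hc
  rw [List.prod_ofFn] at hc
  have h1 : (1 : (𝓞 K)ˣ) = 1 * ∏ i, Units.fundSystem K i ^ c i := by rw [one_mul, hc]
  have := Units.fun_eq_repr (K := K) (Subgroup.one_mem _) h1
  funext i
  rw [congrFun this i]
  simp

theorem mulIndep_card_le {k : ℕ} (F : Fin k → (𝓞 K)ˣ) (hF : MulIndepFam F) :
    k ≤ NumberField.Units.rank K := by
  classical
  have hli : LinearIndependent ℤ
      (fun i => Additive.ofMul (QuotientGroup.mk (F i) : (𝓞 K)ˣ ⧸ Units.torsion K)) := by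
    rw [Fintype.linearIndependent_iff]
    intro c hc
    set x : (𝓞 K)ˣ := ∏ i, F i ^ c i with hx
    have hmkx : (QuotientGroup.mk x : (𝓞 K)ˣ ⧸ Units.torsion K) = 1 := by
      rw [← ofMul_eq_zero, ← hc, hx, QuotientGroup.mk_prod, ofMul_prod]
      refine Finset.sum_congr rfl fun i _ => ?_
      rw [QuotientGroup.mk_zpow, ofMul_zpow]
    have htor : x ∈ Units.torsion K := (QuotientGroup.eq_one_iff _).mp hmkx
    obtain ⟨n, hn, hxn⟩ := isOfFinOrder_iff_pow_eq_one.mp htor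
    have : (List.ofFn fun i => F i ^ (c i * (n : ℤ))).prod = 1 := by
      rw [List.prod_ofFn]
      have : ∀ i, F i ^ (c i * (n : ℤ)) = (F i ^ c i) ^ (n : ℕ) := by
        intro i; rw [zpow_mul, zpow_natCast]
      simp_rw [this]
      rw [Finset.prod_pow, ← hx, hxn]
    have hc0 := hF _ this
    intro i
    have := congrFun hc0 i
    simp only [Pi.zero_apply, mul_eq_zero] at this
    rcases this with h | h
    · exact h
    · exact absurd h (by exact_mod_cast hn.ne')
  have := hli.fintype_card_le_finrank
  rwa [Fintype.card_fin, Units.rank_modTorsion] at this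

end UnitsLemmas


/-! ### The construction -/

namespace Irred216

open Polynomial Module

variable {d : ℕ}

/-- matrix of an element of `SL_d(ℤ)` over `ℚ`. -/
def mQ (s : SLZ d) : Matrix (Fin d) (Fin d) ℚ :=
  ((s : Matrix (Fin d) (Fin d) ℤ)).map (Int.castRingHom ℚ)

theorem mQ_mul (s t : SLZ d) : mQ (s * t) = mQ s * mQ t := by
  show ((Int.castRingHom ℚ)).mapMatrix ((s * t : SLZ d) : Matrix (Fin d) (Fin d) ℤ) = _
  rw [Matrix.SpecialLinearGroup.coe_mul, map_mul]
  rfl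

theorem mQ_one : mQ (1 : SLZ d) = 1 := by
  show ((Int.castRingHom ℚ)).mapMatrix ((1 : SLZ d) : Matrix (Fin d) (Fin d) ℤ) = 1
  rw [Matrix.SpecialLinearGroup.coe_one, map_one]

theorem mQ_inj : Function.Injective (mQ (d := d)) := by
  intro s t h
  have : (s : Matrix (Fin d) (Fin d) ℤ) = (t : Matrix (Fin d) (Fin d) ℤ) := by
    funext i j
    have := congrFun (congrFun h i) j
    simpa [mQ, Matrix.map_apply] using this
  exact Subtype.ext this

/-- the characteristic polynomial over `ℚ`. -/
def pA (A : SLZ d) : ℚ[X] :=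
  ((A : Matrix (Fin d) (Fin d) ℤ).charpoly).map (Int.castRingHom ℚ)

theorem pA_eq (A : SLZ d) : pA A = (mQ A).charpoly :=
  (Matrix.charpoly_map _ _).symm

theorem pA_monic (A : SLZ d) : (pA A).Monic :=
  (Matrix.charpoly_monic _).map _

variable (A : SLZ d) [hFact : Fact (Irreducible (pA A))]

theorem pA_natDegree : (pA A).natDegree = d := by
  show (((A : Matrix (Fin d) (Fin d) ℤ).charpoly).map (Int.castRingHom ℚ)).natDegree = d
  rw [(Matrix.charpoly_monic _).natDegree_map, Matrix.charpoly_natDegree_eq_dim,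
    Fintype.card_fin]

include A hFact in
theorem dpos : 0 < d := by
  by_contra h
  push_neg at h
  have hd : d = 0 := Nat.le_zero.mp h
  have h1 : (pA A).natDegree = 0 := hd ▸ pA_natDegree A
  have : pA A = 1 := (Polynomial.Monic.natDegree_eq_zero (pA_monic A)).mp h1
  exact not_irreducible_one (this ▸ hFact.out)

theorem pA_ne_zero : pA A ≠ 0 := (pA_monic A).ne_zero

/-- The number field. -/
abbrev KK := AdjoinRoot (pA A)

instance : NumberField (KK A) where
  to_charZero := charZero_of_injective_algebraMap (algebraMap ℚ (KK A)).injective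
  to_finiteDimensional := Module.Finite.of_basis (AdjoinRoot.powerBasis (pA_ne_zero A)).basis

theorem finrank_KK : Module.finrank ℚ (KK A) = d := by
  rw [(AdjoinRoot.powerBasis (pA_ne_zero A)).finrank, AdjoinRoot.powerBasis_dim, pA_natDegree]

/-- linear endomorphism attached to an integer matrix. -/
def Ts (s : SLZ d) : Module.End ℚ (Fin d → ℚ) := Matrix.toLinAlgEquiv' (mQ s)

theorem aeval_Ts : aeval (Ts A) (pA A) = 0 := by
  rw [pA_eq, Ts, aeval_algHom_apply (Matrix.toLinAlgEquiv' : _ ≃ₐ[ℚ] _) (mQ A),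
    Matrix.aeval_self_charpoly, map_zero]

/-- the action of `KK A` on `ℚ^d`. -/
def θ : KK A →+* Module.End ℚ (Fin d → ℚ) :=
  Ideal.Quotient.lift _ (aeval (Ts A)).toRingHom (by
    intro a ha
    rw [Ideal.mem_span_singleton] at ha
    obtain ⟨r, rfl⟩ := ha
    simp [map_mul, aeval_Ts])

theorem θ_mk (q : ℚ[X]) : θ A (AdjoinRoot.mk (pA A) q) = aeval (Ts A) q := rfl

theorem θ_algebraMap (r : ℚ) : θ A (algebraMap ℚ (KK A) r) = algebraMap ℚ _ r := by
  show θ A (AdjoinRoot.mk (pA A) (C r)) = _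
  rw [θ_mk, aeval_C]

theorem θ_inj : Function.Injective (θ A) := by
  haveI : Nonempty (Fin d) := ⟨⟨0, dpos A⟩⟩
  exact (θ A).injective

theorem θ_commute (s : SLZ d) (hs : Commute (mQ A) (mQ s)) (y : KK A) :
    Commute (θ A y) (Ts s) := by
  obtain ⟨q, rfl⟩ := AdjoinRoot.mk_surjective y
  rw [θ_mk]
  have hc : Commute (Ts A) (Ts s) := hs.map (Matrix.toLinAlgEquiv' : _ ≃ₐ[ℚ] _).toAlgHom
  exact ((Algebra.commute_of_mem_adjoin_singleton_of_commute
    (Polynomial.aeval_mem_adjoin_singleton ℚ (Ts A)) hc.symm)).symm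

/-- the cyclic vector. -/
def v0 : Fin d → ℚ := Pi.single ⟨0, dpos A⟩ 1

theorem v0_ne_zero : v0 A ≠ 0 := by
  intro h
  have := congrFun h ⟨0, dpos A⟩
  simp [v0] at this

/-- evaluation at the cyclic vector, as a linear map. -/
def εlin : KK A →ₗ[ℚ] (Fin d → ℚ) where
  toFun := fun x => θ A x (v0 A)
  map_add' := fun x y => by
    show θ A (x + y) (v0 A) = θ A x (v0 A) + θ A y (v0 A)
    rw [(θ A).map_add]
    rfl
  map_smul' := fun c x => by
    show θ A (c • x) (v0 A) = c • θ A x (v0 A)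
    rw [Algebra.smul_def, (θ A).map_mul, θ_algebraMap, Module.End.mul_apply,
      Module.algebraMap_end_apply]

theorem εlin_inj : Function.Injective (εlin A) := by
  rw [injective_iff_map_eq_zero]
  intro x hx
  by_contra h
  apply v0_ne_zero A
  have : θ A x⁻¹ (θ A x (v0 A)) = v0 A := by
    rw [← Module.End.mul_apply, ← map_mul, inv_mul_cancel₀ h, map_one]
    rfl
  rw [show θ A x (v0 A) = 0 from hx, map_zero] at this
  exact this.symm

/-- the `ℚ`-linear identification of `KK A` with `ℚ^d`. -/
def EA : KK A ≃ₗ[ℚ] (Fin d → ℚ) :=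
  LinearMap.linearEquivOfInjective (εlin A) (εlin_inj A)
    (by rw [finrank_KK, Module.finrank_fin_fun])

theorem EA_apply (x : KK A) : EA A x = θ A x (v0 A) := rfl

theorem EA_mul (x y : KK A) : EA A (x * y) = θ A x (EA A y) := by
  rw [EA_apply, EA_apply, map_mul, Module.End.mul_apply]

/-- the distinguished `ℚ`-basis of `KK A`. -/
def bB : Basis (Fin d) ℚ (KK A) := (Pi.basisFun ℚ (Fin d)).map (EA A).symm

theorem bB_repr (x : KK A) (i : Fin d) : (bB A).repr x i = EA A x i := by
  simp [bB, Basis.map_repr]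

theorem EA_bB (i : Fin d) : EA A (bB A i) = Pi.single i 1 := by
  rw [bB, Basis.map_apply, LinearEquiv.apply_symm_apply, Pi.basisFun_apply]

/-- the centralizer subgroup. -/
def CC : Subgroup (SLZ d) := Subgroup.centralizer {A}

theorem A_mem_CC : A ∈ CC A := Subgroup.mem_centralizer_iff.mpr (by simp)

theorem commQ (s : ↥(CC A)) : Commute (mQ A) (mQ (s : SLZ d)) := by
  have h := Subgroup.mem_centralizer_iff.mp s.2 A (Set.mem_singleton A)
  show mQ A * mQ (s : SLZ d) = mQ (s : SLZ d) * mQ A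
  rw [← mQ_mul, ← mQ_mul, h]

/-- the element of `KK A` by which an element of the centralizer acts. -/
def αC (s : ↥(CC A)) : KK A := (EA A).symm (Ts (s : SLZ d) (v0 A))

theorem EA_αC (s : ↥(CC A)) : EA A (αC A s) = Ts (s : SLZ d) (v0 A) :=
  LinearEquiv.apply_symm_apply _ _

theorem θ_αC (s : ↥(CC A)) : θ A (αC A s) = Ts (s : SLZ d) := by
  apply LinearMap.ext
  intro m
  obtain ⟨y, rfl⟩ := (EA A).surjective m
  calc θ A (αC A s) (EA A y) = EA A (αC A s * y) := (EA_mul A _ _).symm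
    _ = EA A (y * αC A s) := by rw [mul_comm]
    _ = θ A y (EA A (αC A s)) := EA_mul A _ _
    _ = θ A y (Ts (s : SLZ d) (v0 A)) := by rw [EA_αC]
    _ = Ts (s : SLZ d) (θ A y (v0 A)) := by
        rw [← Module.End.mul_apply, ← Module.End.mul_apply, (θ_commute A _ (commQ A s) y).eq]
    _ = Ts (s : SLZ d) (EA A y) := rfl

theorem Ts_mul (s t : SLZ d) : Ts (s * t) = Ts s * Ts t := by
  rw [Ts, Ts, Ts, mQ_mul, map_mul]

theorem αC_mul (s t : ↥(CC A)) : αC A (s * t) = αC A s * αC A t := by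
  apply θ_inj A
  rw [map_mul, θ_αC, θ_αC, θ_αC]
  exact Ts_mul _ _

theorem Ts_one : Ts (1 : SLZ d) = 1 := by
  show Matrix.toLinAlgEquiv' (mQ (1 : SLZ d)) = 1
  rw [mQ_one, map_one]

theorem αC_one : αC A 1 = 1 := by
  apply θ_inj A
  rw [θ_αC, map_one]
  exact Ts_one

theorem αC_inj : Function.Injective (αC A) := by
  intro s t h
  have h2 : Ts (s : SLZ d) = Ts (t : SLZ d) := by rw [← θ_αC, ← θ_αC, h]
  have h3 : mQ (s : SLZ d) = mQ (t : SLZ d) :=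
    (Matrix.toLinAlgEquiv' : _ ≃ₐ[ℚ] _).injective h2
  exact Subtype.ext (mQ_inj h3)

theorem CC_ab : ∀ a ∈ CC A, ∀ b ∈ CC A, a * b = b * a := by
  intro a ha b hb
  have : αC A (⟨a, ha⟩ * ⟨b, hb⟩) = αC A (⟨b, hb⟩ * ⟨a, ha⟩) := by
    rw [αC_mul, αC_mul, mul_comm]
  have := αC_inj A this
  exact congrArg Subtype.val this

theorem αC_integral (s : ↥(CC A)) : IsIntegral ℤ (αC A s) := by
  refine ⟨((s : SLZ d) : Matrix (Fin d) (Fin d) ℤ).charpoly, Matrix.charpoly_monic _, ?_⟩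
  have h1 : aeval (αC A s)
      ((((s : SLZ d) : Matrix (Fin d) (Fin d) ℤ).charpoly).map (Int.castRingHom ℚ)) = 0 := by
    apply θ_inj A
    have hθa : ∀ x : KK A, (θ A).toRatAlgHom x = θ A x := fun _ => rfl
    rw [← hθa, ← aeval_algHom_apply, hθa, θ_αC, map_zero]
    rw [← Matrix.charpoly_map]
    show aeval (Matrix.toLinAlgEquiv' (mQ (s : SLZ d))) (mQ (s : SLZ d)).charpoly = 0
    rw [aeval_algHom_apply (Matrix.toLinAlgEquiv' : _ ≃ₐ[ℚ] _), Matrix.aeval_self_charpoly,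
      map_zero]
  have h2 : algebraMap ℤ (KK A) = (algebraMap ℚ (KK A)).comp (Int.castRingHom ℚ) :=
    Subsingleton.elim _ _
  rw [Polynomial.eval₂_eq_eval_map]
  rw [h2, ← Polynomial.map_map]
  rw [← Polynomial.eval₂_eq_eval_map, ← Polynomial.aeval_def]
  exact h1

/-- the unit of the ring of integers attached to an element of the centralizer. -/
def ΦC : ↥(CC A) →* (𝓞 (KK A))ˣ where
  toFun := fun s =>
    { val := ⟨αC A s, αC_integral A s⟩
      inv := ⟨αC A s⁻¹, αC_integral A s⁻¹⟩
      val_inv := by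
        ext
        show αC A s * αC A s⁻¹ = 1
        rw [← αC_mul, mul_inv_cancel, αC_one]
      inv_val := by
        ext
        show αC A s⁻¹ * αC A s = 1
        rw [← αC_mul, inv_mul_cancel, αC_one] }
  map_one' := by
    ext
    show αC A 1 = 1
    rw [αC_one]
  map_mul' := by
    intro s t
    ext
    show αC A (s * t) = αC A s * αC A t
    rw [αC_mul]

theorem ΦC_coe (s : ↥(CC A)) :
    algebraMap (𝓞 (KK A)) (KK A) ((ΦC A s : (𝓞 (KK A))ˣ) : 𝓞 (KK A)) = αC A s := rfl

theorem ΦC_inj : Function.Injective (ΦC A) := by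
  intro s t h
  apply αC_inj A
  have := congrArg (fun u => algebraMap (𝓞 (KK A)) (KK A) ((u : (𝓞 (KK A))ˣ) : 𝓞 (KK A))) h
  simpa [ΦC_coe] using this

theorem lmm_eq_θ (x : KK A) :
    Matrix.toLinAlgEquiv' ((Algebra.leftMulMatrix (bB A)) x) = θ A x := by
  apply (Pi.basisFun ℚ (Fin d)).ext
  intro j
  rw [Pi.basisFun_apply]
  have h1 : (Matrix.toLinAlgEquiv' ((Algebra.leftMulMatrix (bB A)) x)) (Pi.single j 1)
      = fun i => (Algebra.leftMulMatrix (bB A)) x i j := by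
    show ((Algebra.leftMulMatrix (bB A)) x).mulVec (Pi.single j 1) = _
    funext i
    rw [Matrix.mulVec_single]
    simp
  rw [h1]
  funext i
  rw [Algebra.leftMulMatrix_eq_repr_mul, bB_repr, EA_mul, EA_bB]

theorem lmm_αC (s : ↥(CC A)) : Algebra.leftMulMatrix (bB A) (αC A s) = mQ (s : SLZ d) := by
  apply (Matrix.toLinAlgEquiv' : _ ≃ₐ[ℚ] _).injective
  rw [lmm_eq_θ, θ_αC]
  rfl


/-! ### the mixed space identification -/

/-- the standard basis of the Euclidean space. -/
def eB : Basis (Fin d) ℝ (EuclideanSpace ℝ (Fin d)) :=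
  (Pi.basisFun ℝ (Fin d)).map (WithLp.linearEquiv 2 ℝ (Fin d → ℝ)).symm

theorem eB_repr (v : EuclideanSpace ℝ (Fin d)) (i : Fin d) : (eB (d := d)).repr v i = v i := by
  rw [eB, Basis.map_repr]
  rfl

theorem eB_decomp (v : EuclideanSpace ℝ (Fin d)) : v = ∑ i, v i • eB (d := d) i := by
  conv_lhs => rw [← Basis.sum_repr (eB (d := d)) v]
  exact Finset.sum_congr rfl fun i _ => by rw [eB_repr]

theorem eB_apply_coord (i j : Fin d) : eB (d := d) i j = (Pi.single i 1 : Fin d → ℝ) j := by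
  rw [eB, Basis.map_apply, Pi.basisFun_apply]
  rfl

def e0 : Module.Free.ChooseBasisIndex ℤ (𝓞 (KK A)) ≃ Fin d :=
  Fintype.equivOfCardEq (by
    rw [Fintype.card_fin, ← Module.finrank_eq_card_chooseBasisIndex,
      NumberField.RingOfIntegers.rank, finrank_KK])

/-- reindexed integral basis. -/
def ibB : Basis (Fin d) ℚ (KK A) := (integralBasis (KK A)).reindex (e0 A)

/-- reindexed lattice basis of the mixed space. -/
def lbB : Basis (Fin d) ℝ (mixedEmbedding.mixedSpace (KK A)) :=
  (mixedEmbedding.latticeBasis (KK A)).reindex (e0 A)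

theorem lbB_apply (j : Fin d) : lbB A j = mixedEmbedding (KK A) (ibB A j) := by
  rw [lbB, ibB, Basis.reindex_apply, Basis.reindex_apply, mixedEmbedding.latticeBasis_apply]

/-- change of basis matrix. -/
def QM : Matrix (Fin d) (Fin d) ℚ := (ibB A).toMatrix (bB A)

instance : Invertible (QM A) := Basis.invertibleToMatrix (ibB A) (bB A)

/-- change of basis matrix over `ℝ`. -/
def QR : Matrix (Fin d) (Fin d) ℝ := (algebraMap ℚ ℝ).mapMatrix (QM A)

instance : Invertible (QR A) := Invertible.map ((algebraMap ℚ ℝ).mapMatrix.toMonoidHom) (QM A)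

/-- the conjugating linear equivalence. -/
def ψ0 : EuclideanSpace ℝ (Fin d) ≃ₗ[ℝ] mixedEmbedding.mixedSpace (KK A) :=
  (WithLp.linearEquiv 2 ℝ (Fin d → ℝ)) ≪≫ₗ (Matrix.toLinearEquiv' (QR A) inferInstance)
    ≪≫ₗ (lbB A).equivFun.symm

theorem ψ0_eB (i : Fin d) : ψ0 A (eB i) = mixedEmbedding (KK A) (bB A i) := by
  have h0 : (WithLp.linearEquiv 2 ℝ (Fin d → ℝ)) (eB (d := d) i) = Pi.single i 1 := by
    rw [eB, Basis.map_apply, Pi.basisFun_apply]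
    exact (WithLp.linearEquiv 2 ℝ (Fin d → ℝ)).apply_symm_apply _
  have h1 : ψ0 A (eB i) = (lbB A).equivFun.symm ((QR A).mulVec (Pi.single i 1)) := by
    rw [ψ0]
    simp only [LinearEquiv.trans_apply, h0]
    congr 1
  rw [h1, Matrix.mulVec_single, Basis.equivFun_symm_apply]
  have h2 : ∀ j, (MulOpposite.op (1 : ℝ) • (QR A).col i) j = algebraMap ℚ ℝ (QM A j i) := fun j => by
    simp; rfl
  simp_rw [h2, algebraMap_smul]
  have h3 : ∀ j, QM A j i = (ibB A).repr (bB A i) j := fun j => Basis.toMatrix_apply _ _ _ _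
  simp_rw [h3, lbB_apply]
  have h6 : ∀ y : KK A, (mixedEmbedding (KK A)).toRatAlgHom.toLinearMap y
      = mixedEmbedding (KK A) y := fun _ => rfl
  simp_rw [← h6, ← LinearMap.map_smul, ← map_sum, Basis.sum_repr]

/-- key identity: the action of a centralizer element on the basis. -/
theorem key_mul (s : ↥(CC A)) (i : Fin d) :
    αC A s * bB A i
      = ∑ k, ((((s : SLZ d) : Matrix (Fin d) (Fin d) ℤ) k i : ℤ) • bB A k) := by
  apply (EA A).injective
  rw [EA_mul, EA_bB, θ_αC, map_sum]
  have h1 : Ts (s : SLZ d) (Pi.single i 1) = fun k => mQ (s : SLZ d) k i := by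
    show (mQ (s : SLZ d)).mulVec (Pi.single i 1) = _
    rw [Matrix.mulVec_single]
    funext k
    simp
  have h2 : ∀ k, EA A ((((s : SLZ d) : Matrix (Fin d) (Fin d) ℤ) k i : ℤ) • bB A k)
      = Pi.single k (((((s : SLZ d) : Matrix (Fin d) (Fin d) ℤ) k i : ℤ) : ℚ)) := fun k => by
    rw [map_zsmul, EA_bB, ← Pi.single_smul]
    norm_num
  simp_rw [h1, h2]
  rw [Finset.univ_sum_single (f := fun k => ((((s : SLZ d) : Matrix (Fin d) (Fin d) ℤ) k i : ℤ) : ℚ))]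
  funext k
  simp [mQ]

/-- `matVec` as a linear map. -/
def mvLin (B : Matrix (Fin d) (Fin d) ℤ) :
    EuclideanSpace ℝ (Fin d) →ₗ[ℝ] EuclideanSpace ℝ (Fin d) :=
  (WithLp.linearEquiv 2 ℝ (Fin d → ℝ)).symm.toLinearMap
    ∘ₗ (Matrix.mulVecLin (B.map (Int.cast : ℤ → ℝ)))
    ∘ₗ (WithLp.linearEquiv 2 ℝ (Fin d → ℝ)).toLinearMap

theorem mvLin_eq (B : Matrix (Fin d) (Fin d) ℤ) (v : EuclideanSpace ℝ (Fin d)) :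
    mvLin B v = matVec B v := by
  ext i
  show ((B.map (Int.cast : ℤ → ℝ)).mulVec v) i = _
  rw [matVec]
  simp [Matrix.mulVec, dotProduct, Matrix.map_apply]

theorem matVec_intLattice (B : Matrix (Fin d) (Fin d) ℤ) (v : EuclideanSpace ℝ (Fin d))
    (hv : v ∈ intLattice d) : matVec B v ∈ intLattice d := by
  intro i
  choose n hn using hv
  refine ⟨∑ j, B i j * n j, ?_⟩
  show ∑ j, (B i j : ℝ) * v j = _
  push_cast
  exact Finset.sum_congr rfl fun j _ => by rw [hn j]

theorem matVec_eB (B : Matrix (Fin d) (Fin d) ℤ) (i : Fin d) :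
    matVec B (eB i) = ∑ k, (B k i : ℤ) • eB (d := d) k := by
  apply (WithLp.linearEquiv 2 ℝ (Fin d → ℝ)).injective
  have h1 : ∀ k, (WithLp.linearEquiv 2 ℝ (Fin d → ℝ)) ((B k i : ℤ) • eB (d := d) k)
      = Pi.single k ((B k i : ℤ) : ℝ) := fun k => by
    rw [map_zsmul]
    have : (WithLp.linearEquiv 2 ℝ (Fin d → ℝ)) (eB (d := d) k) = Pi.single k 1 := by
      rw [eB, Basis.map_apply, Pi.basisFun_apply]
      exact (WithLp.linearEquiv 2 ℝ (Fin d → ℝ)).apply_symm_apply _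
    rw [this, ← Pi.single_smul]
    norm_num
  rw [map_sum]
  simp_rw [h1]
  rw [Finset.univ_sum_single (f := fun k => ((B k i : ℤ) : ℝ))]
  ext j
  show matVec B (eB i) j = _
  rw [matVec]
  have h2 : ∀ l, eB (d := d) i l = (Pi.single i 1 : Fin d → ℝ) l := fun l => eB_apply_coord i l
  simp_rw [h2]
  simp [Pi.single_apply]

theorem conj_core (s : ↥(CC A)) (v : EuclideanSpace ℝ (Fin d)) :
    mixedEmbedding (KK A) (αC A s) * ψ0 A v
      = ψ0 A (matVec ((s : SLZ d) : Matrix (Fin d) (Fin d) ℤ) v) := by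
  have hmaps : (LinearMap.mulLeft ℝ (mixedEmbedding (KK A) (αC A s))).comp (ψ0 A).toLinearMap
      = (ψ0 A).toLinearMap.comp (mvLin ((s : SLZ d) : Matrix (Fin d) (Fin d) ℤ)) := by
    apply Basis.ext (eB (d := d))
    intro i
    show mixedEmbedding (KK A) (αC A s) * ψ0 A (eB i)
      = ψ0 A (mvLin ((s : SLZ d) : Matrix (Fin d) (Fin d) ℤ) (eB i))
    rw [mvLin_eq, matVec_eB, ψ0_eB, ← map_mul, key_mul, map_sum, map_sum]
    refine Finset.sum_congr rfl fun k _ => ?_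
    rw [map_zsmul, map_zsmul, ψ0_eB]
  have := LinearMap.congr_fun hmaps v
  simp only [LinearMap.comp_apply, LinearMap.mulLeft_apply, LinearEquiv.coe_coe] at this
  rw [this, mvLin_eq]

/-! ### the lattice in `KK A` and stabilizing units -/

/-- the `ℤ`-lattice spanned by the distinguished basis. -/
def Γ' : Submodule ℤ (KK A) := Submodule.span ℤ (Set.range ⇑(bB A))

theorem bB_mem_Γ' (i : Fin d) : bB A i ∈ Γ' A := Submodule.subset_span ⟨i, rfl⟩

theorem mem_Γ'_iff (x : KK A) : x ∈ Γ' A ↔ ∀ i, ∃ n : ℤ, (bB A).repr x i = n :=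
  mem_int_span_iff _ _

theorem ibB_apply (j : Fin d) :
    ibB A j = algebraMap (𝓞 (KK A)) (KK A) (RingOfIntegers.basis (KK A) ((e0 A).symm j)) := by
  rw [ibB, Basis.reindex_apply, integralBasis_apply]

theorem ibB_e0 (i : Module.Free.ChooseBasisIndex ℤ (𝓞 (KK A))) :
    ibB A (e0 A i) = algebraMap (𝓞 (KK A)) (KK A) (RingOfIntegers.basis (KK A) i) := by
  rw [ibB_apply, Equiv.symm_apply_apply]

theorem q_denom : ∃ q : ℤ, q ≠ 0 ∧ ∀ i, ∃ y : 𝓞 (KK A),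
    (q : ℤ) • bB A i = algebraMap (𝓞 (KK A)) (KK A) y := by
  have h : ∀ i : Fin d, ∃ n : ℤ, n ≠ 0 ∧ ∃ y : 𝓞 (KK A),
      (n : ℤ) • bB A i = algebraMap (𝓞 (KK A)) (KK A) y := by
    intro i
    obtain ⟨n, hn0, hco⟩ := exists_int_smul_coords (ibB A) (bB A i)
    choose z hz using hco
    refine ⟨n, hn0, ⟨∑ j, z j • RingOfIntegers.basis (KK A) ((e0 A).symm j), ?_⟩⟩
    rw [map_sum]
    have h1 : ∀ j, algebraMap (𝓞 (KK A)) (KK A) (z j • RingOfIntegers.basis (KK A) ((e0 A).symm j))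
        = (z j : ℤ) • ibB A j := fun j => by
      rw [map_zsmul, ibB_apply]
    simp_rw [h1]
    conv_lhs => rw [← Basis.sum_repr (ibB A) ((n : ℤ) • bB A i)]
    refine Finset.sum_congr rfl fun j _ => ?_
    rw [hz j, Int.cast_smul_eq_zsmul]
  choose n hn0 y hy using h
  refine ⟨∏ i, n i, Finset.prod_ne_zero_iff.mpr fun i _ => hn0 i, ?_⟩
  intro i
  obtain ⟨t, ht⟩ : n i ∣ ∏ j, n j := Finset.dvd_prod_of_mem _ (Finset.mem_univ i)
  refine ⟨t • y i, ?_⟩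
  rw [ht, mul_comm, mul_smul, hy i, map_zsmul]

theorem a_denom : ∃ a : ℤ, a ≠ 0 ∧ ∀ j, (a : ℤ) • ibB A j ∈ Γ' A := by
  have h : ∀ j : Fin d, ∃ n : ℤ, n ≠ 0 ∧ (n : ℤ) • ibB A j ∈ Γ' A := by
    intro j
    obtain ⟨n, hn0, hco⟩ := exists_int_smul_coords (bB A) (ibB A j)
    exact ⟨n, hn0, (mem_Γ'_iff A _).mpr hco⟩
  choose n hn0 hmem using h
  refine ⟨∏ j, n j, Finset.prod_ne_zero_iff.mpr fun j _ => hn0 j, ?_⟩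
  intro j
  obtain ⟨t, ht⟩ : n j ∣ ∏ i, n i := Finset.dvd_prod_of_mem _ (Finset.mem_univ j)
  rw [ht, mul_comm, mul_smul]
  exact Submodule.smul_mem _ _ (hmem j)

theorem q_smul_Γ' {q : ℤ} (hq : ∀ i, ∃ y : 𝓞 (KK A),
      (q : ℤ) • bB A i = algebraMap (𝓞 (KK A)) (KK A) y) :
    ∀ γ ∈ Γ' A, ∃ y : 𝓞 (KK A), (q : ℤ) • γ = algebraMap (𝓞 (KK A)) (KK A) y := by
  intro γ hγ
  induction hγ using Submodule.span_induction with
  | mem x hx =>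
    obtain ⟨i, rfl⟩ := hx
    exact hq i
  | zero => exact ⟨0, by simp⟩
  | add x y _ _ hx hy =>
    obtain ⟨y1, h1⟩ := hx
    obtain ⟨y2, h2⟩ := hy
    exact ⟨y1 + y2, by rw [smul_add, h1, h2, map_add]⟩
  | smul a x _ hx =>
    obtain ⟨y1, h1⟩ := hx
    exact ⟨a • y1, by rw [smul_comm, h1, map_zsmul]⟩

theorem a_smul_mem_Γ' {a : ℤ} (ha : ∀ j, (a : ℤ) • ibB A j ∈ Γ' A) (w : 𝓞 (KK A)) :
    (a : ℤ) • algebraMap (𝓞 (KK A)) (KK A) w ∈ Γ' A := by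
  have hw : algebraMap (𝓞 (KK A)) (KK A) w
      = ∑ i, ((RingOfIntegers.basis (KK A)).repr w i : ℤ) • ibB A (e0 A i) := by
    conv_lhs => rw [← Basis.sum_repr (RingOfIntegers.basis (KK A)) w, map_sum]
    refine Finset.sum_congr rfl fun i _ => ?_
    rw [map_zsmul, ibB_e0]
  rw [hw, Finset.smul_sum]
  refine Submodule.sum_mem _ fun i _ => ?_
  rw [smul_comm]
  exact Submodule.smul_mem _ _ (ha (e0 A i))

theorem mapMatrix_int_inj :
    Function.Injective (fun X : Matrix (Fin d) (Fin d) ℤ => (Int.castRingHom ℚ).mapMatrix X) := by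
  intro X Y h
  funext i j
  have := congrFun (congrFun h i) j
  exact Int.cast_injective this

theorem lmm_comm_matrices (X Y : Matrix (Fin d) (Fin d) ℤ) (x y : KK A)
    (hX : (Int.castRingHom ℚ).mapMatrix X = Algebra.leftMulMatrix (bB A) x)
    (hY : (Int.castRingHom ℚ).mapMatrix Y = Algebra.leftMulMatrix (bB A) y) :
    X * Y = Y * X := by
  apply mapMatrix_int_inj
  show (Int.castRingHom ℚ).mapMatrix (X * Y) = (Int.castRingHom ℚ).mapMatrix (Y * X)
  rw [map_mul, map_mul, hX, hY, ← map_mul, ← map_mul, mul_comm]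

theorem exists_N : ∃ N : ℕ, N ≠ 0 ∧
    ∀ u : (𝓞 (KK A))ˣ, ∃ s : ↥(CC A), ΦC A s = u ^ N := by
  classical
  obtain ⟨q, hq0, hqy⟩ := q_denom A
  obtain ⟨a, ha0, haΓ⟩ := a_denom A
  set m : ℤ := q * a with hm
  have hm0 : m ≠ 0 := mul_ne_zero hq0 ha0
  set I : Ideal (𝓞 (KK A)) := Ideal.span {((m : ℤ) : 𝓞 (KK A))} with hI
  have hIbot : I ≠ ⊥ := by
    rw [hI, Ne, Ideal.span_singleton_eq_bot]
    intro h
    apply hm0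
    have := congrArg (algebraMap (𝓞 (KK A)) (KK A)) h
    rw [map_intCast, map_zero] at this
    exact_mod_cast this
  haveI : Fintype ((𝓞 (KK A)) ⧸ I) := @Fintype.ofFinite _ (Ideal.finiteQuotientOfFreeOfNeBot I hIbot)
  haveI : Finite ((𝓞 (KK A)) ⧸ I) := Finite.of_fintype _
  haveI : Finite ((𝓞 (KK A) ⧸ I))ˣ := inferInstance
  set N₀ : ℕ := Nat.card ((𝓞 (KK A) ⧸ I))ˣ with hN₀def
  have hN₀ : N₀ ≠ 0 := Nat.card_pos.ne'
  -- stabilization property for units congruent to 1 mod I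
  have hstab : ∀ w : (𝓞 (KK A))ˣ, ((w : 𝓞 (KK A)) - 1) ∈ I →
      ∀ γ ∈ Γ' A, algebraMap (𝓞 (KK A)) (KK A) (w : 𝓞 (KK A)) * γ ∈ Γ' A := by
    intro w hw γ hγ
    rw [hI, Ideal.mem_span_singleton] at hw
    obtain ⟨z, hz⟩ := hw
    have hw1 : (w : 𝓞 (KK A)) = 1 + ((m : ℤ) : 𝓞 (KK A)) * z := by
      rw [← hz]; ring
    rw [hw1, map_add, map_one, map_mul, map_intCast, add_mul, one_mul]
    refine Submodule.add_mem _ hγ ?_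
    have h2 : ((m : ℤ) : KK A) * (algebraMap (𝓞 (KK A)) (KK A) z * γ)
        = (a : ℤ) • ((q : ℤ) • (algebraMap (𝓞 (KK A)) (KK A) z * γ)) := by
      rw [← mul_smul, ← zsmul_eq_mul, hm, mul_comm q a]
    rw [mul_assoc, h2]
    obtain ⟨y, hy⟩ := q_smul_Γ' A hqy γ hγ
    rw [← mul_smul_comm, hy, ← map_mul]
    exact a_smul_mem_Γ' A haΓ _
  refine ⟨2 * N₀, by simpa using hN₀, ?_⟩
  intro u
  set π : (𝓞 (KK A))ˣ →* ((𝓞 (KK A) ⧸ I))ˣ :=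
    Units.map (Ideal.Quotient.mk I).toMonoidHom with hπ
  have hmk1 : ∀ v : (𝓞 (KK A))ˣ, π v = 1 → ((v : 𝓞 (KK A)) - 1) ∈ I := by
    intro v hv
    have h1 : Ideal.Quotient.mk I (v : 𝓞 (KK A)) = Ideal.Quotient.mk I 1 := by
      have := congrArg Units.val hv
      rw [Units.coe_map] at this
      simpa using this
    exact Ideal.Quotient.eq.mp h1
  set w : (𝓞 (KK A))ˣ := u ^ N₀ with hwdef
  have hπw : π w = 1 := by rw [hwdef, map_pow, hN₀def]; exact pow_card_eq_one'
  have hπw' : π w⁻¹ = 1 := by rw [map_inv, hπw, inv_one]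
  have hsw := hstab w (hmk1 w hπw)
  have hsw' := hstab w⁻¹ (hmk1 w⁻¹ hπw')
  -- integer matrices attached to stabilizing units
  set Sm : (𝓞 (KK A))ˣ → Matrix (Fin d) (Fin d) ℤ := fun v =>
    fun i j => ((bB A).repr (algebraMap (𝓞 (KK A)) (KK A) (v : 𝓞 (KK A)) * bB A j) i).num
    with hSmdef
  have hSm : ∀ v : (𝓞 (KK A))ˣ,
      (∀ γ ∈ Γ' A, algebraMap (𝓞 (KK A)) (KK A) (v : 𝓞 (KK A)) * γ ∈ Γ' A) →
      (Int.castRingHom ℚ).mapMatrix (Sm v)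
        = Algebra.leftMulMatrix (bB A) (algebraMap (𝓞 (KK A)) (KK A) (v : 𝓞 (KK A))) := by
    intro v hv
    funext i j
    show ((Sm v i j : ℤ) : ℚ) = _
    rw [Algebra.leftMulMatrix_eq_repr_mul]
    obtain ⟨n, hn⟩ := (mem_Γ'_iff A _).mp (hv _ (bB_mem_Γ' A j)) i
    rw [hSmdef]
    show (((bB A).repr (algebraMap (𝓞 (KK A)) (KK A) (v : 𝓞 (KK A)) * bB A j) i).num : ℚ)
      = ((bB A).repr (algebraMap (𝓞 (KK A)) (KK A) (v : 𝓞 (KK A)) * bB A j)) i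
    rw [hn, Rat.num_intCast]
  have hdet : ∀ v : ℚ, True := fun _ => trivial
  have hdetc : ∀ v : (𝓞 (KK A))ˣ,
      (∀ γ ∈ Γ' A, algebraMap (𝓞 (KK A)) (KK A) (v : 𝓞 (KK A)) * γ ∈ Γ' A) →
      ((Sm v).det : ℚ)
        = (Algebra.leftMulMatrix (bB A) (algebraMap (𝓞 (KK A)) (KK A) (v : 𝓞 (KK A)))).det := by
    intro v hv
    rw [← hSm v hv, ← RingHom.map_det]
    rfl
  have hdetmul : (Sm w).det * (Sm w⁻¹).det = 1 := by
    have h1 : (((Sm w).det * (Sm w⁻¹).det : ℤ) : ℚ) = 1 := by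
      rw [Int.cast_mul]
      rw [hdetc w hsw, hdetc w⁻¹ hsw', ← Matrix.det_mul, ← map_mul, ← map_mul]
      have : ((w : 𝓞 (KK A)) * ((w⁻¹ : (𝓞 (KK A))ˣ) : 𝓞 (KK A))) = 1 := by
        exact_mod_cast Units.mul_inv w
      rw [this, map_one, map_one, Matrix.det_one]
    exact_mod_cast h1
  have hdet1 : ((Sm w) * (Sm w)).det = 1 := by
    rw [Matrix.det_mul]
    rcases Int.isUnit_iff.mp (IsUnit.of_mul_eq_one _ hdetmul) with h | h <;> rw [h] <;> norm_num
  set sl : SLZ d := ⟨Sm w * Sm w, hdet1⟩ with hsldef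
  have hslC : sl ∈ CC A := by
    have hAmem : A ∈ CC A := A_mem_CC A
    have hcomm : (A : Matrix (Fin d) (Fin d) ℤ) * (Sm w * Sm w)
        = (Sm w * Sm w) * (A : Matrix (Fin d) (Fin d) ℤ) := by
      refine lmm_comm_matrices A _ _ (αC A ⟨A, hAmem⟩)
        (algebraMap (𝓞 (KK A)) (KK A) (w : 𝓞 (KK A))
          * algebraMap (𝓞 (KK A)) (KK A) (w : 𝓞 (KK A))) ?_ ?_
      · exact lmm_αC A ⟨A, hAmem⟩ ▸ rfl
      · rw [map_mul, hSm w hsw, ← map_mul]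
    refine Subgroup.mem_centralizer_iff.mpr ?_
    intro h hh
    rw [Set.mem_singleton_iff] at hh
    subst hh
    apply Subtype.ext
    rw [Matrix.SpecialLinearGroup.coe_mul, Matrix.SpecialLinearGroup.coe_mul]
    exact hcomm
  refine ⟨⟨sl, hslC⟩, ?_⟩
  apply Units.ext
  apply NumberField.RingOfIntegers.ext
  show αC A ⟨sl, hslC⟩ = ((((u ^ (2 * N₀) : (𝓞 (KK A))ˣ)) : 𝓞 (KK A)) : KK A)
  have huw : ((((u ^ (2 * N₀) : (𝓞 (KK A))ˣ)) : 𝓞 (KK A)) : KK A)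
      = algebraMap (𝓞 (KK A)) (KK A) ((w : 𝓞 (KK A)) * (w : 𝓞 (KK A))) := by
    have : (u ^ (2 * N₀) : (𝓞 (KK A))ˣ) = w * w := by
      rw [hwdef, two_mul, pow_add]
    rw [this]
    push_cast
    rfl
  rw [huw]
  apply θ_inj A
  rw [θ_αC, ← lmm_eq_θ]
  show Matrix.toLinAlgEquiv' (mQ (sl : SLZ d)) = _
  congr 1
  show (Int.castRingHom ℚ).mapMatrix (Sm w * Sm w) = _
  rw [map_mul, hSm w hsw, ← map_mul, ← map_mul]

/-! ### assembly of the conjugation data -/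

theorem exists_full {G : Subgroup (SLZ d)} (hab : ∀ a ∈ G, ∀ b ∈ G, a * b = b * a)
    (hAG : A ∈ G) :
    ∃ (S : IrredConjData d G) (C : Subgroup (SLZ d)) (_ : G ≤ C)
      (Φ : ↥C →* (𝓞 S.K)ˣ) (N : ℕ),
      (∀ a ∈ C, ∀ b ∈ C, a * b = b * a) ∧ N ≠ 0 ∧
      (∀ u : (𝓞 S.K)ˣ, ∃ s : ↥C, Φ s = u ^ N) := by
  have hGC : G ≤ CC A := by
    intro s hs
    refine Subgroup.mem_centralizer_iff.mpr ?_
    intro h hh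
    rw [Set.mem_singleton_iff] at hh
    rw [hh]
    exact hab A hAG s hs
  obtain ⟨N, hN0, hback⟩ := exists_N A
  refine ⟨{ K := KK A
            deg := finrank_KK A
            φ := (ΦC A).comp (Subgroup.inclusion hGC)
            φinj := ?_
            Γ := AddSubgroup.map (ψ0 A).toLinearMap.toAddMonoidHom (intLattice d)
            ΓinK := ?_
            Γinv := ?_
            ψ := ψ0 A
            ψlat := ?_
            conj := ?_ }, CC A, hGC, ΦC A, N, CC_ab A, hN0, hback⟩
  · -- φinj
    intro x y h
    simp only [MonoidHom.comp_apply] at h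
    exact Subgroup.inclusion_injective hGC (ΦC_inj A h)
  · -- ΓinK
    rintro x ⟨v, hv, rfl⟩
    choose n hn using hv
    refine ⟨∑ i, (n i : ℤ) • bB A i, ?_⟩
    have h1 : mixedEmbedding (KK A) (∑ i, (n i : ℤ) • bB A i)
        = ∑ i, (n i : ℤ) • mixedEmbedding (KK A) (bB A i) := by
      rw [map_sum]
      exact Finset.sum_congr rfl fun i _ => map_zsmul _ _ _
    rw [h1]
    show _ = ψ0 A v
    conv_rhs => rw [eB_decomp v]
    rw [map_sum]
    refine (Finset.sum_congr rfl fun i _ => ?_).symm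
    rw [map_smul, ψ0_eB, hn i, Int.cast_smul_eq_zsmul]
  · -- Γinv
    rintro g x ⟨v, hv, rfl⟩
    have h1 := conj_core A (Subgroup.inclusion hGC g) v
    refine ⟨matVec (((Subgroup.inclusion hGC g : ↥(CC A)) : SLZ d) : Matrix (Fin d) (Fin d) ℤ) v,
      matVec_intLattice _ _ hv, ?_⟩
    show ψ0 A _ = _
    rw [← h1]
    rfl
  · -- ψlat
    intro v
    constructor
    · rintro ⟨w, hw, hww⟩
      have : w = v := (ψ0 A).injective hww
      subst this
      exact hw
    · intro hv
      exact ⟨v, hv, rfl⟩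
  · -- conj
    intro g v
    have h1 := conj_core A (Subgroup.inclusion hGC g) v
    show (ψ0 A).symm (mixedEmbedding (KK A) (αC A (Subgroup.inclusion hGC g)) * ψ0 A v) = _
    rw [h1, LinearEquiv.symm_apply_apply]
    rfl

end Irred216



/-- **Maximal rank forces finite index in the full unit group**
(Proposition 2.16 of the paper). If `G ≤ SL_d(ℤ)` is abelian, contains an irreducible
element, and is maximal in rank among abelian subgroups of `SL_d(ℤ)`, then the data of the
preceding construction can be chosen so that `φ(G)` has finite index in `U_K`; in particular
`rank G = rank U_K`. -/
theorem finite_index_of_maximal_rank (d : ℕ) (G : Subgroup (SLZ d))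
    (hab : ∀ a ∈ G, ∀ b ∈ G, a * b = b * a)
    (hirr : ∃ g ∈ G, IrreducibleMat g)
    (hmax : ∀ G₁ : Subgroup (SLZ d), G ≤ G₁ → (∀ a ∈ G₁, ∀ b ∈ G₁, a * b = b * a) →
      ∀ k : ℕ, RankGE G₁ k → RankGE G k) :
    ∃ S : IrredConjData d G, S.φ.range.index ≠ 0 ∧
      ∀ k : ℕ, RankGE (⊤ : Subgroup (𝓞 S.K)ˣ) k ↔ RankGE G k := by
  classical
  obtain ⟨A, hAG, hA⟩ := hirr
  haveI : Fact (Irreducible (Irred216.pA A)) := ⟨hA⟩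
  obtain ⟨S, C, hGC, Φ, N, hCab, hN0, hback⟩ := Irred216.exists_full A hab hAG
  have hGindep : ∀ {k : ℕ} (f : Fin k → SLZ d) (hf : ∀ i, f i ∈ G), MulIndepFam f →
      MulIndepFam (fun i => S.φ ⟨f i, hf i⟩) := by
    intro k f hf hind
    refine MulIndepFam.map S.φ S.φinj ?_
    refine MulIndepFam.of_comp G.subtype ?_
    exact hind
  have hiff : ∀ k : ℕ, RankGE (⊤ : Subgroup (𝓞 S.K)ˣ) k ↔ RankGE G k := by
    intro k
    constructor
    · rintro ⟨u, -, hu⟩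
      choose s hs using fun i => hback (u i)
      apply hmax C hGC hCab k
      refine ⟨fun i => ((s i : ↥C) : SLZ d), fun i => (s i).2, ?_⟩
      intro c hc
      have hc' : (List.ofFn fun i => (s i) ^ (c i)).prod = 1 := by
        apply Subgroup.subtype_injective C
        rw [map_one, hom_ofFn_prod]
        exact hc
      have h2 := congrArg Φ hc'
      rw [map_one, hom_ofFn_prod] at h2
      have h3 : ∀ i, Φ (s i) ^ c i = u i ^ ((N : ℤ) * c i) := by
        intro i
        rw [hs i, ← zpow_natCast, ← zpow_mul]
      simp_rw [h3] at h2
      have h4 := hu _ h2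
      funext i
      have := congrFun h4 i
      simp only [Pi.zero_apply, mul_eq_zero] at this
      rcases this with h | h
      · exact absurd h (by exact_mod_cast hN0)
      · exact h
    · rintro ⟨f, hf, hind⟩
      exact ⟨fun i => S.φ ⟨f i, hf i⟩, fun _ => Subgroup.mem_top _, hGindep f hf hind⟩
  refine ⟨S, ?_, hiff⟩
  -- finite index part
  set H : Subgroup (𝓞 S.K)ˣ := S.φ.range with hH
  obtain ⟨f, hf, hind⟩ := (hiff (NumberField.Units.rank S.K)).1 (rankge_top_units S.K)
  set v : Fin (NumberField.Units.rank S.K) → (𝓞 S.K)ˣ := fun i => S.φ ⟨f i, hf i⟩ with hv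
  have hvH : ∀ i, v i ∈ H := fun i => ⟨⟨f i, hf i⟩, rfl⟩
  have hvind : MulIndepFam v := hGindep f hf hind
  haveI : H.Normal := Subgroup.normal_of_comm H
  have htor : ∀ y : (𝓞 S.K)ˣ ⧸ H, IsOfFinOrder y := by
    intro y
    obtain ⟨u, rfl⟩ := QuotientGroup.mk'_surjective H y
    set F : Fin (NumberField.Units.rank S.K + 1) → (𝓞 S.K)ˣ := Fin.snoc v u with hF
    have hnotind : ¬ MulIndepFam F := by
      intro h
      have := mulIndep_card_le S.K F h
      omega
    rw [MulIndepFam] at hnotind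
    push_neg at hnotind
    obtain ⟨c, hc1, hc2⟩ := hnotind
    have hprod : (∏ i, F i ^ c i) = 1 := by rw [← List.prod_ofFn]; exact hc1
    rw [Fin.prod_univ_castSucc] at hprod
    have hFc : ∀ i : Fin (NumberField.Units.rank S.K), F i.castSucc = v i := fun i =>
      Fin.snoc_castSucc _ _ _
    have hFl : F (Fin.last _) = u := Fin.snoc_last _ _
    simp_rw [hFc, hFl] at hprod
    set n : ℤ := c (Fin.last _) with hn
    have hn0 : n ≠ 0 := by
      intro h0
      apply hc2
      have hprod' : (∏ i, v i ^ c i.castSucc) = 1 := by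
        rw [h0, zpow_zero, mul_one] at hprod
        exact hprod
      have := hvind (fun i => c i.castSucc) (by rw [List.prod_ofFn]; exact hprod')
      funext i
      rcases Fin.eq_castSucc_or_eq_last i with ⟨j, rfl⟩ | rfl
      · exact congrFun this j
      · rw [← hn]; exact h0
    have humem : u ^ n ∈ H := by
      have : u ^ n = (∏ i, v i ^ c i.castSucc)⁻¹ := by
        rw [eq_inv_iff_mul_eq_one, mul_comm]
        exact hprod
      rw [this]
      refine Subgroup.inv_mem _ (Subgroup.prod_mem _ fun i _ => Subgroup.zpow_mem _ (hvH i) _)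
    have hq : (QuotientGroup.mk' H u) ^ n = 1 := by
      rw [← map_zpow, QuotientGroup.mk'_apply, QuotientGroup.eq_one_iff]
      exact humem
    refine isOfFinOrder_iff_pow_eq_one.mpr ⟨n.natAbs, Int.natAbs_pos.mpr hn0, ?_⟩
    rcases Int.natAbs_eq n with h | h
    · rw [← zpow_natCast, ← h, hq]
    · rw [← zpow_natCast, ← neg_neg (n.natAbs : ℤ), ← h, zpow_neg, hq, inv_one]
  haveI : Group.FG (𝓞 S.K)ˣ := Group.fg_iff_monoid_fg.mpr inferInstance
  haveI : Finite ((𝓞 S.K)ˣ ⧸ H) := CommGroup.finite_of_fg_torsion _ htor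
  exact Subgroup.index_ne_zero_of_finite

end
end

section
/- Let g ∈ SL_d(ℤ) be totally irreducible, i.e. the characteristic polynomial of g^n is irreducible over ℚ for every n ≥ 1. Let ζ ∈ ℂ be an eigenvalue of g and let K = ℚ(ζ), a number field of degree d. Then K is not a CM-field. -/
open scoped BigOperators NumberField
open NumberField

noncomputable section

/-- The subgroup of units of `𝓞 K` lying in a subfield `F` of `K`; it is canonically
isomorphic to the unit group of the ring of integers of `F`. -/
def unitsInSubfield (K : Type*) [Field K] (F : Subfield K) : Subgroup (𝓞 K)ˣ where
  carrier := {u | algebraMap (𝓞 K) K ((u : (𝓞 K)ˣ) : 𝓞 K) ∈ F}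
  one_mem' := by simpa using F.one_mem
  mul_mem' := by
    intro a b ha hb
    simpa using F.mul_mem ha hb
  inv_mem' := by
    intro a ha
    show algebraMap (𝓞 K) K ((a⁻¹ : (𝓞 K)ˣ) : 𝓞 K) ∈ F
    have h : algebraMap (𝓞 K) K ((a⁻¹ : (𝓞 K)ˣ) : 𝓞 K)
        * algebraMap (𝓞 K) K ((a : (𝓞 K)ˣ) : 𝓞 K) = 1 := by
      rw [← map_mul, Units.inv_mul, map_one]
    rw [eq_inv_of_mul_eq_one_left h]
    exact F.inv_mem ha

/-- `K` is a CM-field: it has a proper subfield `F` with `rank U_F = rank U_K`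
(since `U_F ≤ U_K`, this is expressed as: every `k` with `rank U_K ≥ k` also has
`rank U_F ≥ k`). -/
def IsCM (K : Type*) [Field K] : Prop :=
  ∃ F : Subfield K, F ≠ ⊤ ∧
    ∀ k : ℕ, RankGE (⊤ : Subgroup (𝓞 K)ˣ) k → RankGE (unitsInSubfield K F) k

/-- The logarithmic Mahler measure (base 2) of a unit of `𝓞 K`:
`h^Mah(u) = ∑_{σ : K →+* ℂ} log₊ |σ(u)|`. -/
def unitHMah (K : Type*) [Field K] [NumberField K] (u : (𝓞 K)ˣ) : ℝ :=
  ∑ σ : K →+* ℂ, max 0 (Real.logb 2 ‖σ (algebraMap (𝓞 K) K (u : 𝓞 K))‖)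

/-- The size of (virtually) fundamental units of a subgroup `U ≤ U_K`: the infimum of all
`F > 0` such that the units of `U` of logarithmic Mahler measure at most `F` generate a
finite-index subgroup of `U`. -/
def fundSize (K : Type*) [Field K] [NumberField K] (U : Subgroup (𝓞 K)ˣ) : ℝ :=
  sInf {F : ℝ | 0 < F ∧
    (Subgroup.closure {t : (𝓞 K)ˣ | t ∈ U ∧ unitHMah K t ≤ F}).relIndex U ≠ 0}

namespace NBaux
open Polynomial

section Matrixfacts
variable {d : ℕ}

lemma eval_charpoly_eq (M : Matrix (Fin d) (Fin d) ℂ) (μ : ℂ) :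
    M.charpoly.eval μ = (μ • (1 : Matrix (Fin d) (Fin d) ℂ) - M).det := by
  rw [Matrix.charpoly, ← Polynomial.coe_evalRingHom, RingHom.map_det]
  congr 1
  ext i j
  by_cases h : i = j <;>
    simp [Matrix.charmatrix_apply, h, Matrix.one_apply, Matrix.smul_apply]

lemma isRoot_charpoly_iff (M : Matrix (Fin d) (Fin d) ℂ) (μ : ℂ) :
    M.charpoly.IsRoot μ ↔ ∃ v, v ≠ 0 ∧ M.mulVec v = μ • v := by
  rw [IsRoot, eval_charpoly_eq, ← Matrix.exists_mulVec_eq_zero_iff]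
  constructor
  · rintro ⟨v, hv, h⟩
    refine ⟨v, hv, ?_⟩
    rw [Matrix.sub_mulVec, Matrix.smul_mulVec, Matrix.one_mulVec, sub_eq_zero] at h
    exact h.symm
  · rintro ⟨v, hv, h⟩
    refine ⟨v, hv, ?_⟩
    rw [Matrix.sub_mulVec, Matrix.smul_mulVec, Matrix.one_mulVec, sub_eq_zero, h]

lemma mulVec_pow (M : Matrix (Fin d) (Fin d) ℂ) (v : Fin d → ℂ) (μ : ℂ)
    (h : M.mulVec v = μ • v) (n : ℕ) : (M ^ n).mulVec v = μ ^ n • v := by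
  induction n with
  | zero => simp [Matrix.one_mulVec]
  | succ n ih =>
      rw [pow_succ', pow_succ', ← Matrix.mulVec_mulVec, ih, Matrix.mulVec_smul, h,
        smul_smul, mul_comm]
end Matrixfacts

section Units
open NumberField.Units NumberField.Units.dirichletUnitTheorem

variable (L : Type*) [Field L] [NumberField L]

lemma logEmbedding_prod {k : ℕ} (v : Fin k → (𝓞 L)ˣ) (c : Fin k → ℤ) :
    logEmbedding L (Additive.ofMul (∏ i, v i ^ c i)) =
      ∑ i, c i • logEmbedding L (Additive.ofMul (v i)) := by
  rw [show Additive.ofMul (∏ i, v i ^ c i) = ∑ i, c i • Additive.ofMul (v i) by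
    rw [ofMul_prod]; exact Finset.sum_congr rfl fun i _ => ofMul_zpow _ _]
  rw [map_sum]
  exact Finset.sum_congr rfl fun i _ => map_zsmul _ _ _

lemma card_le_rank_of_mulIndep {k : ℕ} (v : Fin k → (𝓞 L)ˣ) (hv : MulIndepFam v) :
    k ≤ rank L := by
  classical
  have hmem : ∀ i, logEmbedding L (Additive.ofMul (v i)) ∈ unitLattice L := fun i =>
    ⟨Additive.ofMul (v i), trivial, rfl⟩
  set w : Fin k → unitLattice L := fun i => ⟨_, hmem i⟩ with hw
  have hli : LinearIndependent ℤ w := by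
    rw [Fintype.linearIndependent_iff]
    intro c hc
    have hc' : logEmbedding L (Additive.ofMul (∏ i, v i ^ c i)) = 0 := by
      rw [logEmbedding_prod]
      have := congrArg (Submodule.subtype (unitLattice L)) hc
      simpa using this
    rw [logEmbedding_eq_zero_iff] at hc'
    obtain ⟨n, hn, hqn⟩ := isOfFinOrder_iff_pow_eq_one.mp hc'
    have : (List.ofFn fun i => v i ^ (c i * (n : ℤ))).prod = 1 := by
      rw [List.prod_ofFn]
      calc ∏ i, v i ^ (c i * (n : ℤ)) = ∏ i, (v i ^ c i) ^ (n : ℤ) := by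
            refine Finset.prod_congr rfl fun i _ => ?_; rw [← zpow_mul]
        _ = (∏ i, v i ^ c i) ^ (n : ℤ) := by rw [Finset.prod_zpow]
        _ = 1 := by rw [zpow_natCast, hqn]
    have h0 := hv _ this
    intro i
    have := congrFun h0 i
    simp only [Pi.zero_apply, mul_eq_zero] at this
    rcases this with h | h
    · exact h
    · exact absurd h (by exact_mod_cast hn.ne')
  have := hli.fintype_card_le_finrank
  simpa [unitLattice_rank] using this

lemma mulIndep_fundSystem : MulIndepFam (fundSystem L) := by
  classical
  intro c hc
  rw [List.prod_ofFn] at hc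
  have h0 : logEmbedding L (Additive.ofMul (∏ i, fundSystem L i ^ c i)) = 0 := by
    rw [hc]; simp
  rw [logEmbedding_prod] at h0
  simp_rw [logEmbedding_fundSystem] at h0
  have h1 : ∑ i, c i • basisUnitLattice L i = 0 := by
    apply Subtype.ext
    push_cast
    exact h0
  have hli := (basisUnitLattice L).linearIndependent
  rw [Fintype.linearIndependent_iff] at hli
  exact funext (hli c h1)
end Units

section CM
open Module

variable {K : Type*} [Field K] [NumberField K] (F : Subfield K)

lemma cm_step [NumberField F] (hKreal : NumberField.InfinitePlace.nrRealPlaces K = 0)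
    (hFcplx : NumberField.InfinitePlace.nrComplexPlaces F = 0)
    (hFK : finrank F K = 2)
    (z zinv : K) (hz : z * zinv = 1)
    (hzint : IsIntegral ℤ z) (hzinvint : IsIntegral ℤ zinv) :
    ∃ m : ℕ, 0 < m ∧ ∃ y : F, z ^ (2 * m) = algebraMap F K y := by
  classical
  haveI : FiniteDimensional F K := by
    refine Module.finite_of_finrank_pos (R := F) (M := K) ?_
    omega
  set N : F := Algebra.norm F zinv with hN
  set x : K := z ^ 2 * algebraMap F K N with hx
  have hxint : IsIntegral ℤ x := by
    refine (hzint.pow 2).mul ?_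
    exact IsIntegral.algebraMap (Algebra.isIntegral_norm F hzinvint)
  have hznz : z ≠ 0 := by
    intro h; rw [h, zero_mul] at hz; exact zero_ne_one hz
  have habs : ∀ φ : K →+* ℂ, ‖φ x‖ = 1 := by
    intro σ
    letI : Algebra F ℂ := (σ.comp (algebraMap F K)).toAlgebra
    have halgmap : ∀ y : F, algebraMap F ℂ y = σ (algebraMap F K y) := fun y => rfl
    have hFreal : ∀ y : F, (starRingEnd ℂ) (σ (algebraMap F K y)) = σ (algebraMap F K y) := by
      have : ∀ w : InfinitePlace F, w.IsReal := by
        intro w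
        by_contra hw
        rw [NumberField.InfinitePlace.not_isReal_iff_isComplex] at hw
        have : 0 < NumberField.InfinitePlace.nrComplexPlaces F := by
          rw [Fintype.card_pos_iff]; exact ⟨⟨w, hw⟩⟩
        omega
      have hreal := (NumberField.InfinitePlace.isReal_mk_iff
        (φ := σ.comp (algebraMap F K))).mp (this _)
      intro y
      exact RingHom.congr_fun hreal y
    let τ₁ : K →ₐ[F] ℂ := { toRingHom := σ, commutes' := fun y => rfl }
    let τ₂ : K →ₐ[F] ℂ := { toRingHom := ((starRingEnd ℂ) : ℂ →+* ℂ).comp σ,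
                            commutes' := fun y => hFreal y }
    have hτne : τ₁ ≠ τ₂ := by
      intro h
      have hsreal : NumberField.ComplexEmbedding.IsReal σ := by
        rw [NumberField.ComplexEmbedding.isReal_iff]
        ext w
        have := congrArg (fun t => (t : K →ₐ[F] ℂ) w) h.symm
        exact this
      have : 0 < NumberField.InfinitePlace.nrRealPlaces K := by
        rw [Fintype.card_pos_iff]
        exact ⟨⟨NumberField.InfinitePlace.mk σ,
          NumberField.InfinitePlace.isReal_mk_iff.mpr hsreal⟩⟩
      omega
    have hcard : Fintype.card (K →ₐ[F] ℂ) = 2 := by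
      rw [AlgHom.card]; exact hFK
    have huniv : (Finset.univ : Finset (K →ₐ[F] ℂ)) = {τ₁, τ₂} := by
      symm
      apply Finset.eq_of_subset_of_card_le (Finset.subset_univ _)
      rw [Finset.card_univ, hcard, Finset.card_insert_of_notMem (by simpa using hτne),
        Finset.card_singleton]
    have hnorm : algebraMap F ℂ N = σ zinv * (starRingEnd ℂ) (σ zinv) := by
      rw [hN, Algebra.norm_eq_prod_embeddings, huniv,
        Finset.prod_insert (by simpa using hτne), Finset.prod_singleton]
      rfl
    have hxσ : σ x = (σ z) ^ 2 * (σ zinv * (starRingEnd ℂ) (σ zinv)) := by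
      rw [hx, map_mul, map_pow, ← halgmap, hnorm]
    have hzz : σ z * σ zinv = 1 := by rw [← map_mul, hz, map_one]
    have hconj : ‖(starRingEnd ℂ) (σ zinv)‖ = ‖σ zinv‖ := by
      simpa using Complex.norm_conj (σ zinv)
    have hinv : ‖σ z‖ * ‖σ zinv‖ = 1 := by rw [← norm_mul, hzz, norm_one]
    rw [hxσ, norm_mul, norm_pow, norm_mul, hconj]
    calc ‖σ z‖ ^ 2 * (‖σ zinv‖ * ‖σ zinv‖) = (‖σ z‖ * ‖σ zinv‖) ^ 2 := by ring
      _ = 1 := by rw [hinv]; norm_num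
  obtain ⟨m, hm, hxm⟩ := NumberField.Embeddings.pow_eq_one_of_norm_eq_one K ℂ hxint habs
  have h1 : z ^ (2 * m) * algebraMap F K (N ^ m) = 1 := by
    have h2 := hxm
    rw [hx, mul_pow, ← pow_mul, ← map_pow] at h2
    exact h2
  exact ⟨m, hm, (N ^ m)⁻¹, by rw [map_inv₀]; exact eq_inv_of_mul_eq_one_left h1⟩
end CM
end NBaux

open Polynomial NBaux Module


set_option maxHeartbeats 4000000
set_option synthInstance.maxHeartbeats 400000

/-- **Total irreducibility forces a non-CM field** (Proposition 2.17 of the paper).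
If `g ∈ SL_d(ℤ)` is totally irreducible and `ζ ∈ ℂ` is an eigenvalue of `g`, then the number
field `K = ℚ(ζ)` (of degree `d`) is not a CM-field. -/
theorem not_CM_of_totally_irreducible (d : ℕ) (g : SLZ d)
    (hg : TotallyIrreducibleMat g) (ζ : ℂ)
    (hζ : (((g : Matrix (Fin d) (Fin d) ℤ).charpoly).map (Int.castRingHom ℂ)).IsRoot ζ) :
    ¬ IsCM (IntermediateField.adjoin ℚ {ζ}) := by
  classical
  intro hCM
  -- Matrix eigenvalue facts
  set A : Matrix (Fin d) (Fin d) ℂ :=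
    ((g : Matrix (Fin d) (Fin d) ℤ).map (Int.castRingHom ℂ)) with hA
  have hAch : A.charpoly = ((g : Matrix (Fin d) (Fin d) ℤ).charpoly).map (Int.castRingHom ℂ) :=
    Matrix.charpoly_map _ _
  have hroot : A.charpoly.IsRoot ζ := by rw [hAch]; exact hζ
  obtain ⟨v, hv0, hvA⟩ := (isRoot_charpoly_iff A ζ).mp hroot
  have hζ0 : ζ ≠ 0 := by
    intro h
    have h1 : A.charpoly.IsRoot 0 := h ▸ hroot
    rw [IsRoot, eval_charpoly_eq, zero_smul, zero_sub, Matrix.det_neg] at h1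
    have hdet : A.det = 1 := by
      rw [hA, ← RingHom.mapMatrix_apply, ← RingHom.map_det,
        Matrix.SpecialLinearGroup.det_coe, map_one]
    rw [hdet, mul_one] at h1
    exact pow_ne_zero _ (by norm_num : (-1 : ℂ) ≠ 0) h1
  -- the intermediate field
  set Kf : IntermediateField ℚ ℂ := IntermediateField.adjoin ℚ {ζ} with hKf
  have hζmem : ζ ∈ Kf := IntermediateField.mem_adjoin_simple_self ℚ ζ
  have hζint : IsIntegral ℤ ζ := by
    refine ⟨(g : Matrix (Fin d) (Fin d) ℤ).charpoly, (g : Matrix (Fin d) (Fin d) ℤ).charpoly_monic,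
      ?_⟩
    rw [show algebraMap ℤ ℂ = Int.castRingHom ℂ from rfl, eval₂_eq_eval_map]
    exact hζ
  have hζintQ : IsIntegral ℚ ζ := hζint.tower_top
  haveI : FiniteDimensional ℚ Kf := IntermediateField.adjoin.finiteDimensional hζintQ
  haveI : NumberField Kf := ⟨⟩
  -- minpoly facts
  have hcomp : (algebraMap ℚ ℂ).comp (Int.castRingHom ℚ) = Int.castRingHom ℂ := by
    ext n
    simp
  have hminp : ∀ n : ℕ, 0 < n → minpoly ℚ (ζ ^ n) =
      (((g ^ n : SLZ d) : Matrix (Fin d) (Fin d) ℤ).charpoly).map (Int.castRingHom ℚ) := by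
    intro n hn
    have hAn : ((g ^ n : SLZ d) : Matrix (Fin d) (Fin d) ℤ).map (Int.castRingHom ℂ) = A ^ n := by
      rw [Matrix.SpecialLinearGroup.coe_pow, hA, ← RingHom.mapMatrix_apply,
        ← RingHom.mapMatrix_apply, map_pow]
    have hrootn : (A ^ n).charpoly.IsRoot (ζ ^ n) :=
      (isRoot_charpoly_iff _ _).mpr ⟨v, hv0, mulVec_pow A v ζ hvA n⟩
    have hchn : (A ^ n).charpoly =
        ((((g ^ n : SLZ d) : Matrix (Fin d) (Fin d) ℤ).charpoly).map (Int.castRingHom ℚ)).map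
          (algebraMap ℚ ℂ) := by
      rw [← hAn, Matrix.charpoly_map, Polynomial.map_map, hcomp]
    refine (minpoly.eq_of_irreducible_of_monic (hg n hn) ?_ ?_).symm
    · rw [aeval_def, eval₂_eq_eval_map, ← hchn]
      exact hrootn
    · exact (((g ^ n : SLZ d) : Matrix (Fin d) (Fin d) ℤ).charpoly_monic).map _
  have hdeg : ∀ n : ℕ, 0 < n → (minpoly ℚ (ζ ^ n)).natDegree = d := by
    intro n hn
    rw [hminp n hn,
      (((g ^ n : SLZ d) : Matrix (Fin d) (Fin d) ℤ).charpoly_monic).natDegree_map,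
      Matrix.charpoly_natDegree_eq_dim, Fintype.card_fin]
  have hfinrank : finrank ℚ Kf = d := by
    rw [hKf, IntermediateField.adjoin.finrank hζintQ]
    have := hdeg 1 one_pos
    rwa [pow_one] at this
  -- the CM data
  obtain ⟨F, hFne, hFrank⟩ := hCM
  obtain ⟨f, hfF, hfind⟩ := hFrank (NumberField.Units.rank Kf)
    ⟨NumberField.Units.fundSystem Kf, fun _ => trivial, mulIndep_fundSystem Kf⟩
  haveI : FiniteDimensional ℚ F := FiniteDimensional.left ℚ F Kf
  haveI : FiniteDimensional F Kf := FiniteDimensional.right ℚ F Kf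
  haveI : NumberField F := ⟨⟩
  -- transport the independent family into `𝓞 F`
  have hintF : ∀ (u : (𝓞 Kf)ˣ) (hu : u ∈ unitsInSubfield Kf F),
      IsIntegral ℤ (⟨algebraMap (𝓞 Kf) Kf (u : 𝓞 Kf), hu⟩ : F) := by
    intro u hu
    rw [← isIntegral_algebraMap_iff (algebraMap F Kf).injective]
    exact RingOfIntegers.isIntegral_coe _
  -- the family of units of `𝓞 F`
  have hfFinv : ∀ i, (f i)⁻¹ ∈ unitsInSubfield Kf F := fun i =>
    (unitsInSubfield Kf F).inv_mem (hfF i)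
  set uvval : Fin (NumberField.Units.rank Kf) → 𝓞 F := fun i =>
    ⟨⟨algebraMap (𝓞 Kf) Kf ((f i : (𝓞 Kf)ˣ) : 𝓞 Kf), hfF i⟩, hintF _ (hfF i)⟩ with huvval
  set uvinv : Fin (NumberField.Units.rank Kf) → 𝓞 F := fun i =>
    ⟨⟨algebraMap (𝓞 Kf) Kf (((f i)⁻¹ : (𝓞 Kf)ˣ) : 𝓞 Kf), hfFinv i⟩, hintF _ (hfFinv i)⟩ with huvinv
  have huv1 : ∀ i, uvval i * uvinv i = 1 := by
    intro i
    apply RingOfIntegers.ext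
    apply Subtype.ext
    show (algebraMap (𝓞 Kf) Kf ((f i : (𝓞 Kf)ˣ) : 𝓞 Kf))
        * (algebraMap (𝓞 Kf) Kf (((f i)⁻¹ : (𝓞 Kf)ˣ) : 𝓞 Kf)) = 1
    rw [← map_mul, Units.mul_inv, map_one]
  have huv1' : ∀ i, uvinv i * uvval i = 1 := fun i => by
    rw [mul_comm]; exact huv1 i
  set uv : Fin (NumberField.Units.rank Kf) → (𝓞 F)ˣ := fun i =>
    ⟨uvval i, uvinv i, huv1 i, huv1' i⟩ with huv
  -- mapping back
  set Φ : (𝓞 F)ˣ →* (𝓞 Kf)ˣ :=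
    Units.map (RingOfIntegers.mapRingHom (algebraMap F Kf)).toMonoidHom with hΦ
  have hΦuv : ∀ i, Φ (uv i) = f i := by
    intro i
    apply Units.ext
    apply RingOfIntegers.ext
    rfl
  have huvind : MulIndepFam uv := by
    intro c hc
    apply hfind c
    have := congrArg Φ hc
    rw [map_one] at this
    have hfun : (⇑Φ ∘ fun i => uv i ^ c i) = fun i => f i ^ c i := by
      funext i
      simp only [Function.comp_apply, map_zpow, hΦuv]
    rw [← this, map_list_prod, List.map_ofFn, hfun]
  have hrankle : NumberField.Units.rank Kf ≤ NumberField.Units.rank F :=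
    card_le_rank_of_mulIndep F uv huvind
  -- numerology
  have hcardK := NumberField.InfinitePlace.card_eq_nrRealPlaces_add_nrComplexPlaces Kf
  have hcardF := NumberField.InfinitePlace.card_eq_nrRealPlaces_add_nrComplexPlaces F
  have hdegK := NumberField.InfinitePlace.card_add_two_mul_card_eq_rank Kf
  have hdegF := NumberField.InfinitePlace.card_add_two_mul_card_eq_rank F
  have hposK : 0 < Fintype.card (InfinitePlace Kf) := Fintype.card_pos
  have hposF : 0 < Fintype.card (InfinitePlace F) := Fintype.card_pos
  have hrankKdef : NumberField.Units.rank Kf = Fintype.card (InfinitePlace Kf) - 1 := rfl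
  have hrankFdef : NumberField.Units.rank F = Fintype.card (InfinitePlace F) - 1 := rfl
  have htower : finrank ℚ F * finrank F Kf = finrank ℚ Kf :=
    finrank_mul_finrank ℚ F Kf
  have hFKne1 : finrank F Kf ≠ 1 := by
    intro h1
    apply hFne
    have hbot : (⊥ : Subalgebra F Kf) = ⊤ := Subalgebra.bot_eq_top_of_finrank_eq_one h1
    ext x
    simp only [Subfield.mem_top, iff_true]
    have hx : x ∈ (⊤ : Subalgebra F Kf) := trivial
    rw [← hbot, Algebra.mem_bot] at hx
    obtain ⟨y, hy⟩ := hx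
    rw [← hy]
    exact y.2
  have hFKpos : 0 < finrank F Kf := finrank_pos
  have hFpos : 0 < finrank ℚ F := finrank_pos
  have h2e : 2 * finrank ℚ F ≤ finrank ℚ Kf := by
    rw [← htower]
    have : 2 ≤ finrank F Kf := by omega
    nlinarith
  -- equalities forced
  have hKreal : NumberField.InfinitePlace.nrRealPlaces Kf = 0 := by omega
  have hFcplx : NumberField.InfinitePlace.nrComplexPlaces F = 0 := by omega
  have he2 : finrank ℚ Kf = 2 * finrank ℚ F := by omega
  have hFK2 : finrank F Kf = 2 := by
    have := htower
    rw [he2] at this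
    have h2 : finrank ℚ F * finrank F Kf = finrank ℚ F * 2 := by omega
    exact Nat.eq_of_mul_eq_mul_left hFpos h2
  -- apply the CM step to ζ
  set zK : Kf := ⟨ζ, hζmem⟩ with hzK
  set zKinv : Kf := ⟨ζ⁻¹, Kf.inv_mem hζmem⟩ with hzKinv
  have hzprod : zK * zKinv = 1 := by
    apply Subtype.ext
    show ζ * ζ⁻¹ = 1
    field_simp
  have hintKf : ∀ (w : ℂ) (hw : w ∈ Kf), IsIntegral ℤ w → IsIntegral ℤ (⟨w, hw⟩ : Kf) := by
    intro w hw hint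
    rw [← isIntegral_algHom_iff (Kf.val.toRingHom.toIntAlgHom) Subtype.val_injective]
    exact hint
  have hzKint : IsIntegral ℤ zK := hintKf ζ hζmem hζint
  -- ζ⁻¹ is an algebraic integer
  have hζinvint : IsIntegral ℤ (ζ⁻¹ : ℂ) := by
    set B : Matrix (Fin d) (Fin d) ℂ :=
      ((g⁻¹ : SLZ d) : Matrix (Fin d) (Fin d) ℤ).map (Int.castRingHom ℂ) with hB
    have hBA : B * A = 1 := by
      rw [hB, hA, ← RingHom.mapMatrix_apply, ← RingHom.mapMatrix_apply, ← map_mul,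
        ← Matrix.SpecialLinearGroup.coe_mul, inv_mul_cancel,
        Matrix.SpecialLinearGroup.coe_one, map_one]
    have h2 : B.mulVec (A.mulVec v) = v := by
      rw [Matrix.mulVec_mulVec, hBA, Matrix.one_mulVec]
    rw [hvA, Matrix.mulVec_smul] at h2
    have h3 : B.mulVec v = ζ⁻¹ • v := by
      have h4 := congrArg (fun w => ζ⁻¹ • w) h2
      simpa [smul_smul, inv_mul_cancel₀ hζ0] using h4
    have hrootB : B.charpoly.IsRoot ζ⁻¹ := (isRoot_charpoly_iff _ _).mpr ⟨v, hv0, h3⟩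
    refine ⟨((g⁻¹ : SLZ d) : Matrix (Fin d) (Fin d) ℤ).charpoly,
      ((g⁻¹ : SLZ d) : Matrix (Fin d) (Fin d) ℤ).charpoly_monic, ?_⟩
    rw [show algebraMap ℤ ℂ = Int.castRingHom ℂ from rfl, eval₂_eq_eval_map,
      ← Matrix.charpoly_map]
    exact hrootB
  have hzKinvint : IsIntegral ℤ zKinv := hintKf ζ⁻¹ (Kf.inv_mem hζmem) hζinvint
  obtain ⟨m, hm, y, hy⟩ := cm_step F hKreal hFcplx hFK2 zK zKinv hzprod hzKint hzKinvint
  -- degree contradiction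
  have hd1 : (minpoly ℚ (zK ^ (2 * m))).natDegree ≤ finrank ℚ F := by
    have he := minpoly.algHom_eq (IsScalarTower.toAlgHom ℚ F Kf)
      (algebraMap F Kf).injective y
    rw [IsScalarTower.coe_toAlgHom'] at he
    rw [hy, he]
    exact minpoly.natDegree_le y
  have hd2 : minpoly ℚ (zK ^ (2 * m)) = minpoly ℚ (ζ ^ (2 * m)) := by
    have hv := minpoly.algHom_eq (Kf.val) (Subtype.val_injective) (zK ^ (2 * m))
    have hval : Kf.val (zK ^ (2 * m)) = ζ ^ (2 * m) := by rw [map_pow]; rfl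
    rw [← hval]
    exact hv.symm
  rw [hd2, hdeg (2 * m) (by omega)] at hd1
  omega

end
end

section
/- For every integer r ≥ 2 there exists an effective constant c = c(r) > 0 such that for every N ∈ ℕ, any finite family of proper linear subspaces of ℝ^r whose union contains the grid I_N^r = {−N, −N+1, …, N−1, N}^r ⊂ ℤ^r has cardinality at least c·N. -/
open Classical in
/-- A proper subspace contains at most `(2N+1)^(r-1)` grid points. -/
lemma hyperplane_grid_count (r N : ℕ) (W : Submodule ℝ (Fin r → ℝ)) (hW : W ≠ ⊤) :
    ((Fintype.piFinset fun _ : Fin r => Finset.Icc (-(N:ℤ)) N).filter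
      (fun v => (fun i => (v i : ℝ)) ∈ W)).card ≤ (2 * N + 1) ^ (r - 1) := by
  obtain ⟨f, hf0, hker⟩ := W.exists_le_ker_of_lt_top (lt_top_iff_ne_top.mpr hW)
  have : ∃ j : Fin r, f (fun k => if j = k then 1 else 0) ≠ 0 := by
    by_contra h
    push_neg at h
    apply hf0
    apply LinearMap.ext
    intro x
    rw [LinearMap.pi_apply_eq_sum_univ f x]
    simp [h]
  obtain ⟨j, hj⟩ := this
  set a : Fin r → ℝ := fun i => f (fun k => if i = k then 1 else 0) with ha
  have hcard : ((Fintype.piFinset fun _ : Fin r => Finset.Icc (-(N:ℤ)) N).filter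
      (fun v => (fun i => (v i : ℝ)) ∈ W)).card ≤
      (Fintype.piFinset fun i : Fin r =>
        if i = j then ({0} : Finset ℤ) else Finset.Icc (-(N:ℤ)) N).card := by
    apply Finset.card_le_card_of_injOn (fun v => Function.update v j 0)
    · intro v hv
      simp only [Finset.mem_coe, Finset.mem_filter, Fintype.mem_piFinset] at hv ⊢
      intro i
      by_cases hij : i = j
      · subst hij; simp [Function.update_self]
      · simp [Function.update_of_ne hij, hij, hv.1 i]
    · intro v hv w hw huv
      simp only [Finset.coe_filter, Set.mem_setOf_eq, Fintype.mem_piFinset] at hv hw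
      have hveq : ∀ i, i ≠ j → v i = w i := by
        intro i hij
        have := congrFun huv i
        simpa [Function.update_of_ne hij] using this
      have hv0 : ∑ i, ((v i : ℝ)) * a i = 0 := by
        have := hker hv.2
        rw [LinearMap.mem_ker, LinearMap.pi_apply_eq_sum_univ f] at this
        simpa [smul_eq_mul, ha] using this
      have hw0 : ∑ i, ((w i : ℝ)) * a i = 0 := by
        have := hker hw.2
        rw [LinearMap.mem_ker, LinearMap.pi_apply_eq_sum_univ f] at this
        simpa [smul_eq_mul, ha] using this
      have hsum : ∑ i, ((v i : ℝ)) * a i = ∑ i, ((w i : ℝ)) * a i := by rw [hv0, hw0]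
      rw [← Finset.add_sum_erase _ _ (Finset.mem_univ j),
          ← Finset.add_sum_erase _ _ (Finset.mem_univ j)] at hsum
      have hrest : ∑ i ∈ Finset.univ.erase j, ((v i : ℝ)) * a i
          = ∑ i ∈ Finset.univ.erase j, ((w i : ℝ)) * a i := by
        apply Finset.sum_congr rfl
        intro i hi
        rw [hveq i (Finset.ne_of_mem_erase hi)]
      rw [hrest] at hsum
      have haj : a j ≠ 0 := hj
      have hR : (v j : ℝ) = w j := by
        have := add_right_cancel hsum
        exact mul_right_cancel₀ haj this
      have hvj : v j = w j := by exact_mod_cast hR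
      funext i
      by_cases hij : i = j
      · subst hij; exact hvj
      · exact hveq i hij
  refine hcard.trans (le_of_eq ?_)
  rw [Fintype.card_piFinset]
  have hIcc : (Finset.Icc (-(N:ℤ)) N).card = 2 * N + 1 := by
    clear * -
    rw [Int.card_Icc]; omega
  calc ∏ i : Fin r, (if i = j then ({0} : Finset ℤ) else Finset.Icc (-(N:ℤ)) N).card
      = ∏ i : Fin r, (if i = j then 1 else 2 * N + 1) := by
        apply Finset.prod_congr rfl; intro i _
        by_cases h : i = j <;> simp [h, hIcc]
    _ = (2 * N + 1) ^ (r - 1) := by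
        rw [← Finset.mul_prod_erase _ _ (Finset.mem_univ j), if_pos rfl, one_mul,
          Finset.prod_congr rfl (fun i hi => if_neg (Finset.ne_of_mem_erase hi)),
          Finset.prod_const, Finset.card_erase_of_mem (Finset.mem_univ j), Finset.card_univ,
          Fintype.card_fin]

/-- **Covering a grid by proper subspaces** (Lemma 3.1 of the paper).
For every `r ≥ 2` there is an effective constant `c = c(r) > 0` such that for every `N ∈ ℕ`,
any finite family of proper linear subspaces of `ℝ^r` whose union contains the grid
`I_N^r = {-N, …, N}^r ⊂ ℤ^r` has cardinality at least `c·N`. -/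
theorem grid_cover_lower_bound (r : ℕ) (hr : 2 ≤ r) :
    ∃ c : ℝ, 0 < c ∧
      ∀ (N : ℕ) (S : Finset (Submodule ℝ (Fin r → ℝ))),
        (∀ W ∈ S, W ≠ ⊤) →
        (∀ v : Fin r → ℤ, (∀ i, |v i| ≤ (N : ℤ)) →
          ∃ W ∈ S, (fun i => (v i : ℝ)) ∈ W) →
        c * (N : ℝ) ≤ (S.card : ℝ) := by
  classical
  refine ⟨1, one_pos, fun N S hS hcov => ?_⟩
  rw [one_mul]
  have key : N ≤ S.card := by
    set G : Finset (Fin r → ℤ) := Fintype.piFinset fun _ : Fin r => Finset.Icc (-(N:ℤ)) N with hG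
    have hGsub : G ⊆ S.biUnion (fun W => G.filter (fun v => (fun i => (v i : ℝ)) ∈ W)) := by
      intro v hv
      have hv' : ∀ i, |v i| ≤ (N : ℤ) := by
        intro i
        have := (Fintype.mem_piFinset.mp hv) i
        rw [Finset.mem_Icc] at this
        exact abs_le.mpr this
      obtain ⟨W, hWS, hWv⟩ := hcov v hv'
      exact Finset.mem_biUnion.mpr ⟨W, hWS, Finset.mem_filter.mpr ⟨hv, hWv⟩⟩
    have h1 : G.card ≤ ∑ W ∈ S, (G.filter (fun v => (fun i => (v i : ℝ)) ∈ W)).card :=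
      (Finset.card_le_card hGsub).trans (Finset.card_biUnion_le)
    have h2 : ∑ W ∈ S, (G.filter (fun v => (fun i => (v i : ℝ)) ∈ W)).card
        ≤ S.card * (2 * N + 1) ^ (r - 1) := by
      apply Finset.sum_le_card_nsmul
      intro W hW
      exact hyperplane_grid_count r N W (hS W hW)
    have hIcc : (Finset.Icc (-(N:ℤ)) N).card = 2 * N + 1 := by
      clear * -
      rw [Int.card_Icc]; omega
    have hGcard : G.card = (2 * N + 1) ^ r := by
      rw [hG, Fintype.card_piFinset]
      simp [hIcc]
    have hpow : (2 * N + 1) ^ r = (2 * N + 1) ^ (r - 1) * (2 * N + 1) := by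
      rw [← pow_succ]
      congr 1
      clear * - hr
      omega
    have hNle : 2 * N + 1 ≤ S.card := by
      have h3 : (2 * N + 1) ^ (r - 1) * (2 * N + 1) ≤ (2 * N + 1) ^ (r - 1) * S.card := by
        rw [← hpow]
        calc (2 * N + 1) ^ r = G.card := hGcard.symm
          _ ≤ _ := h1.trans h2
          _ = _ := Nat.mul_comm _ _
      exact Nat.le_of_mul_le_mul_left h3 (Nat.pow_pos (Nat.succ_pos _))
    clear * - hNle
    omega
  exact_mod_cast key
end

section
/- Let f: ℂ → ℝ be a nonzero ℝ-linear form on ℂ viewed as a two-dimensional real vector space, let λ > 0 and c > 0, and let v, w ∈ ℂ satisfy |v| ≥ c, |w| ≥ c, |f(v)| ≤ λ·‖f‖ and |f(w)| ≤ λ·‖f‖. Then the arguments of v and w are (πλ/c)-close up to a multiple of π: there exists m ∈ ℤ such that |arg v − arg w − mπ| ≤ πλ/c. -/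
open Real Complex

private lemma arcsin_le_aux (ε : ℝ) (h0 : 0 ≤ ε) (h1 : ε ≤ 1) :
    Real.arcsin ε ≤ Real.pi / 2 * ε := by
  have hπ := Real.pi_pos
  rw [Real.arcsin_le_iff_le_sin ⟨by linarith, h1⟩
    ⟨by nlinarith, by nlinarith⟩]
  have h := Real.mul_le_sin (x := Real.pi / 2 * ε) (by positivity) (by nlinarith)
  have he : 2 / Real.pi * (Real.pi / 2 * ε) = ε := by field_simp
  linarith [he ▸ h]

private lemma abs_le_of_sin_le (β ε : ℝ) (hβ : |β| ≤ Real.pi / 2) (h0 : 0 ≤ ε) (h1 : ε ≤ 1)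
    (h : |Real.sin β| ≤ ε) : |β| ≤ Real.pi / 2 * ε := by
  have hπ := Real.pi_pos
  have hs : Real.sin |β| = |Real.sin β| := by
    rcases abs_cases β with ⟨he, hb⟩ | ⟨he, hb⟩
    · rw [he]
      exact (_root_.abs_of_nonneg (Real.sin_nonneg_of_nonneg_of_le_pi hb
        (by linarith [abs_le.mp hβ]))).symm
    · rw [he, Real.sin_neg]
      have : Real.sin β ≤ 0 := by
        have := Real.sin_nonneg_of_nonneg_of_le_pi (x := -β) (by linarith)
          (by rw [he] at hβ; linarith)
        rwa [Real.sin_neg, neg_nonneg] at this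
      rw [abs_of_nonpos this]
  have h2 : |β| = Real.arcsin (Real.sin |β|) :=
    (Real.arcsin_sin (by linarith [abs_nonneg β]) hβ).symm
  rw [h2, hs]
  exact le_trans (Real.monotone_arcsin h) (arcsin_le_aux ε h0 h1)

private lemma close_half_pi (ε α : ℝ) (h0 : 0 ≤ ε) (h1 : ε ≤ 1)
    (hα1 : -Real.pi < α) (hα2 : α ≤ Real.pi) (h : |Real.cos α| ≤ ε) :
    ∃ s : ℝ, (s = 1 ∨ s = -1) ∧ |α - s * (Real.pi / 2)| ≤ Real.pi / 2 * ε := by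
  have hπ := Real.pi_pos
  by_cases hα : 0 ≤ α
  · refine ⟨1, Or.inl rfl, ?_⟩
    have hcos : Real.cos α = -Real.sin (α - Real.pi / 2) := by
      rw [← Real.cos_add_pi_div_two]; ring_nf
    have hsin : |Real.sin (α - Real.pi / 2)| ≤ ε := by
      rw [← abs_neg, ← hcos]; exact h
    have := abs_le_of_sin_le (α - Real.pi / 2) ε (by rw [abs_le]; constructor <;> linarith) h0 h1 hsin
    simpa [one_mul] using this
  · refine ⟨-1, Or.inr rfl, ?_⟩
    push_neg at hα
    have hcos : Real.cos α = Real.sin (α + Real.pi / 2) :=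
      (Real.sin_add_pi_div_two α).symm
    have hsin : |Real.sin (α + Real.pi / 2)| ≤ ε := by rw [← hcos]; exact h
    have := abs_le_of_sin_le (α + Real.pi / 2) ε (by rw [abs_le]; constructor <;> linarith) h0 h1 hsin
    have heq : α - (-1) * (Real.pi / 2) = α + Real.pi / 2 := by ring
    rwa [heq]

/-- **Near-kernel vectors of a real form on `ℂ` have aligned arguments**
(Lemma 5.7 of the paper). If `f(v) = f₁·Re v + f₂·Im v` is a nonzero real linear form on `ℂ`
with norm `‖f‖ = √(f₁² + f₂²)`, and `v, w ∈ ℂ` satisfy `|v|, |w| ≥ c` and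
`|f(v)|, |f(w)| ≤ λ·‖f‖`, then the arguments of `v` and `w` agree up to a multiple of `π`
within `πλ/c`. -/
theorem args_close_of_small_form (f₁ f₂ : ℝ) (hf : ¬(f₁ = 0 ∧ f₂ = 0))
    (lam c : ℝ) (hlam : 0 < lam) (hc : 0 < c) (v w : ℂ)
    (hv : c ≤ ‖v‖) (hw : c ≤ ‖w‖)
    (hfv : |f₁ * v.re + f₂ * v.im| ≤ lam * Real.sqrt (f₁ ^ 2 + f₂ ^ 2))
    (hfw : |f₁ * w.re + f₂ * w.im| ≤ lam * Real.sqrt (f₁ ^ 2 + f₂ ^ 2)) :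
    ∃ m : ℤ, |Complex.arg v - Complex.arg w - m * Real.pi| ≤ Real.pi * lam / c := by
  have hπ := Real.pi_pos
  by_cases htr : 1 < lam / c
  · -- trivial case: the bound exceeds π/2, use rounding
    set x := Complex.arg v - Complex.arg w with hx
    refine ⟨round (x / Real.pi), ?_⟩
    have h1 : |x / Real.pi - round (x / Real.pi)| ≤ 1 / 2 := abs_sub_round _
    have h2 : x - (round (x / Real.pi) : ℝ) * Real.pi
        = (x / Real.pi - round (x / Real.pi)) * Real.pi := by field_simp
    rw [h2, abs_mul, abs_of_pos hπ]
    have h3 : Real.pi / 2 ≤ Real.pi * lam / c := by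
      rw [mul_div_assoc]; nlinarith
    nlinarith
  push_neg at htr
  -- the form as a complex number (conjugated)
  set N := Real.sqrt (f₁ ^ 2 + f₂ ^ 2) with hN
  have hsum : 0 < f₁ ^ 2 + f₂ ^ 2 := by
    rcases not_and_or.mp hf with h | h <;> positivity
  have hNpos : 0 < N := Real.sqrt_pos.mpr hsum
  set u : ℂ := ⟨f₁, -f₂⟩ with hu
  have habsu : ‖u‖ = N := by
    rw [Complex.norm_def, Complex.normSq_mk, hN]
    congr 1; ring
  have hune : u ≠ 0 := by
    intro h
    rw [h] at habsu
    simp at habsu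
    exact hNpos.ne' habsu.symm
  have hvne : v ≠ 0 := by
    intro h; rw [h] at hv; simp at hv; linarith
  have hwne : w ≠ 0 := by
    intro h; rw [h] at hw; simp at hw; linarith
  have habsv : 0 < ‖v‖ := lt_of_lt_of_le hc hv
  have habsw : 0 < ‖w‖ := lt_of_lt_of_le hc hw
  -- cosine bounds
  have key : ∀ z : ℂ, z ≠ 0 → c ≤ ‖z‖ →
      |f₁ * z.re + f₂ * z.im| ≤ lam * N → |Real.cos (Complex.arg (u * z))| ≤ lam / c := by
    intro z hz hcz hfz
    have huz : u * z ≠ 0 := mul_ne_zero hune hz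
    have habsz : 0 < ‖z‖ := lt_of_lt_of_le hc hcz
    have hre : (u * z).re = f₁ * z.re + f₂ * z.im := by
      simp [hu, Complex.mul_re]
    have habs : ‖u * z‖ = N * ‖z‖ := by
      rw [norm_mul, habsu]
    rw [Complex.cos_arg huz, hre, habs, abs_div,
      _root_.abs_of_pos (mul_pos hNpos habsz)]
    rw [div_le_div_iff₀ (mul_pos hNpos habsz) hc]
    calc |f₁ * z.re + f₂ * z.im| * c ≤ (lam * N) * ‖z‖ :=
          mul_le_mul hfz hcz hc.le (by positivity)
    _ = lam * (N * ‖z‖) := by ring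
  have hε0 : (0:ℝ) ≤ lam / c := by positivity
  obtain ⟨sv, hsv, hbv⟩ := close_half_pi (lam / c) (Complex.arg (u * v)) hε0 htr
    (Complex.neg_pi_lt_arg _) (Complex.arg_le_pi _) (key v hvne hv hfv)
  obtain ⟨sw, hsw, hbw⟩ := close_half_pi (lam / c) (Complex.arg (u * w)) hε0 htr
    (Complex.neg_pi_lt_arg _) (Complex.arg_le_pi _) (key w hwne hw hfw)
  -- angle identity
  have hA : ((Complex.arg (u * v) - Complex.arg (u * w) : ℝ) : Real.Angle)
      = ((Complex.arg v - Complex.arg w : ℝ) : Real.Angle) := by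
    rw [Real.Angle.coe_sub, Real.Angle.coe_sub, Complex.arg_mul_coe_angle hune hvne,
      Complex.arg_mul_coe_angle hune hwne]
    abel
  rw [Real.Angle.angle_eq_iff_two_pi_dvd_sub] at hA
  obtain ⟨k, hk⟩ := hA
  -- choose m₀ with sv·π/2 − sw·π/2 = m₀·π
  obtain ⟨m₀, hm₀⟩ : ∃ m₀ : ℤ, sv * (Real.pi / 2) - sw * (Real.pi / 2) = (m₀ : ℝ) * Real.pi := by
    rcases hsv with h1 | h1 <;> rcases hsw with h2 | h2
    · exact ⟨0, by rw [h1, h2]; push_cast; ring⟩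
    · exact ⟨1, by rw [h1, h2]; push_cast; ring⟩
    · exact ⟨-1, by rw [h1, h2]; push_cast; ring⟩
    · exact ⟨0, by rw [h1, h2]; push_cast; ring⟩
  refine ⟨m₀ - 2 * k, ?_⟩
  have hT : Complex.arg v - Complex.arg w - ((m₀ - 2 * k : ℤ) : ℝ) * Real.pi
      = (Complex.arg (u * v) - sv * (Real.pi / 2))
        - (Complex.arg (u * w) - sw * (Real.pi / 2)) := by
    push_cast
    have hk' : Complex.arg (u * v) - Complex.arg (u * w)
        - (Complex.arg v - Complex.arg w) = 2 * Real.pi * k := hk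
    linarith [hm₀, hk']
  rw [hT]
  rw [abs_le] at hbv hbw ⊢
  have heq : Real.pi * lam / c = Real.pi / 2 * (lam / c) + Real.pi / 2 * (lam / c) := by
    field_simp; ring
  constructor <;> rw [heq] <;> [linarith [hbv.1, hbw.2]; linarith [hbv.2, hbw.1]]
end

section
/- Let F ⊂ ℂ be a subfield of ℂ that is a number field of degree d over ℚ, and let ζ, ρ ∈ F be nonzero. Then there exists a subfield F̃ ⊂ ℂ that is a number field of degree at most 4d² over ℚ such that ζ/|ζ| ∈ F̃ and ρ/|ρ| ∈ F̃. -/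
open IntermediateField Polynomial

set_option maxHeartbeats 1000000

noncomputable def ratLinearEquivOfRingEquiv {A B : Type*} [DivisionRing A] [DivisionRing B]
    [Algebra ℚ A] [Algebra ℚ B] (e : A ≃+* B) : A ≃ₗ[ℚ] B where
  toFun := e
  invFun := e.symm
  left_inv := e.left_inv
  right_inv := e.right_inv
  map_add' := map_add e
  map_smul' := by
    intro q x
    simp only [RingHom.id_apply, Algebra.smul_def, map_mul]
    congr 1
    rw [eq_ratCast (algebraMap ℚ A), map_ratCast, eq_ratCast (algebraMap ℚ B)]

lemma adjoin_sq (K : IntermediateField ℚ ℂ) [FiniteDimensional ℚ K] (x : ℂ)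
    (hx : x ^ 2 ∈ K) :
    FiniteDimensional ℚ ((K⟮x⟯).restrictScalars ℚ) ∧
      Module.finrank ℚ ((K⟮x⟯).restrictScalars ℚ) ≤ 2 * Module.finrank ℚ K := by
  have hint : IsIntegral K x := by
    refine ⟨X ^ 2 - C ⟨x ^ 2, hx⟩, monic_X_pow_sub_C _ two_ne_zero, ?_⟩
    simp [Polynomial.eval₂_sub]
  have hfd : FiniteDimensional K K⟮x⟯ := IntermediateField.adjoin.finiteDimensional hint
  have hdeg : Module.finrank K K⟮x⟯ ≤ 2 := by
    rw [IntermediateField.adjoin.finrank hint]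
    have hle := minpoly.degree_le_of_ne_zero K x
      (p := X ^ 2 - C ⟨x ^ 2, hx⟩) (by
        intro h
        have := congrArg natDegree h
        simp [natDegree_X_pow_sub_C] at this) (by simp [Polynomial.eval₂_sub])
    have h2 : (X ^ 2 - C (⟨x ^ 2, hx⟩ : K)).natDegree = 2 := natDegree_X_pow_sub_C
    calc (minpoly K x).natDegree ≤ (X ^ 2 - C (⟨x ^ 2, hx⟩ : K)).natDegree :=
          natDegree_le_natDegree hle
      _ = 2 := h2
  refine ⟨FiniteDimensional.trans ℚ K K⟮x⟯, ?_⟩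
  have hmul := Module.finrank_mul_finrank ℚ K K⟮x⟯
  have heq : Module.finrank ℚ ((K⟮x⟯).restrictScalars ℚ) = Module.finrank ℚ K⟮x⟯ := rfl
  rw [heq, ← hmul, mul_comm]
  exact Nat.mul_le_mul_right _ hdeg

/-- **Normalized elements lie in a bounded-degree extension** (Lemma 5.8 of the paper).
If `F ⊂ ℂ` is a number field of degree `d` embedded in `ℂ` and `ζ, ρ ∈ F` are nonzero, then
there is a subfield `F̃ ⊂ ℂ` which is a number field of degree at most `4d²` containing
`ζ/|ζ|` and `ρ/|ρ|`. -/
theorem unit_circle_parts_in_bounded_degree_subfield (d : ℕ) (F : Subfield ℂ)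
    [FiniteDimensional ℚ F] (hF : Module.finrank ℚ F = d)
    (ζ ρ : ℂ) (hζF : ζ ∈ F) (hρF : ρ ∈ F) (hζ : ζ ≠ 0) (hρ : ρ ≠ 0) :
    ∃ F' : Subfield ℂ, FiniteDimensional ℚ F' ∧ Module.finrank ℚ F' ≤ 4 * d ^ 2 ∧
      ζ / (‖ζ‖ : ℂ) ∈ F' ∧ ρ / (‖ρ‖ : ℂ) ∈ F' := by
  classical
  have hQF : ∀ q : ℚ, algebraMap ℚ ℂ q ∈ F := by
    intro q
    simpa [eq_ratCast (algebraMap ℚ ℂ) q] using SubfieldClass.ratCast_mem F q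
  set E : IntermediateField ℚ ℂ := F.toIntermediateField hQF with hE
  have hmemE : ∀ z : ℂ, z ∈ E ↔ z ∈ F := fun z => Iff.rfl
  -- transfer finrank from F to E
  let eFE : F ≃+* E :=
    { toFun := fun x => ⟨x.1, (hmemE x.1).mpr x.2⟩
      invFun := fun x => ⟨x.1, (hmemE x.1).mp x.2⟩
      left_inv := fun x => rfl
      right_inv := fun x => rfl
      map_mul' := fun x y => rfl
      map_add' := fun x y => rfl }
  have hfdE : FiniteDimensional ℚ E :=
    Module.Finite.equiv (ratLinearEquivOfRingEquiv eFE)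
  have hdE : Module.finrank ℚ E = d := by
    rw [← (ratLinearEquivOfRingEquiv eFE).finrank_eq, hF]
  -- conjugate field
  let σ : ℂ ≃ₐ[ℚ] ℂ := Complex.conjAe.restrictScalars ℚ
  set E' : IntermediateField ℚ ℂ := E.map (σ : ℂ →ₐ[ℚ] ℂ) with hE'
  have hfdE' : FiniteDimensional ℚ E' :=
    Module.Finite.equiv (IntermediateField.intermediateFieldMap σ E).toLinearEquiv
  have hdE' : Module.finrank ℚ E' = d := by
    rw [hE']
    exact ((IntermediateField.intermediateFieldMap σ E).toLinearEquiv.finrank_eq).symm.trans hdE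
  -- the compositum
  set K : IntermediateField ℚ ℂ := E ⊔ E' with hK
  have hfdK : FiniteDimensional ℚ K := IntermediateField.finiteDimensional_sup E E'
  have hdK : Module.finrank ℚ K ≤ d ^ 2 := by
    calc Module.finrank ℚ K ≤ Module.finrank ℚ E * Module.finrank ℚ E' :=
          IntermediateField.finrank_sup_le E E'
      _ = d ^ 2 := by rw [hdE, hdE', sq]
  -- membership of ζ, conj ζ etc. in K
  have hEK : E ≤ K := le_sup_left
  have hE'K : E' ≤ K := le_sup_right
  have hζK : ζ ∈ K := hEK ((hmemE ζ).mpr hζF)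
  have hρK : ρ ∈ K := hEK ((hmemE ρ).mpr hρF)
  have hζcK : (starRingEnd ℂ) ζ ∈ K := hE'K ⟨ζ, (hmemE ζ).mpr hζF, rfl⟩
  have hρcK : (starRingEnd ℂ) ρ ∈ K := hE'K ⟨ρ, (hmemE ρ).mpr hρF, rfl⟩
  -- the normalized elements and their squares
  set u : ℂ := ζ / (‖ζ‖ : ℂ) with hu
  set v : ℂ := ρ / (‖ρ‖ : ℂ) with hv
  have habs : ∀ z : ℂ, ((‖z‖ : ℝ) : ℂ) ^ 2 = z * (starRingEnd ℂ) z := by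
    intro z
    rw [Complex.mul_conj]
    norm_cast
    rw [Complex.sq_norm]
  have hu2 : u ^ 2 = ζ / (starRingEnd ℂ) ζ := by
    have hζc : (starRingEnd ℂ) ζ ≠ 0 := by simpa using hζ
    rw [hu, div_pow, habs ζ]
    field_simp
  have hv2 : v ^ 2 = ρ / (starRingEnd ℂ) ρ := by
    have hρc : (starRingEnd ℂ) ρ ≠ 0 := by simpa using hρ
    rw [hv, div_pow, habs ρ]
    field_simp
  have hu2K : u ^ 2 ∈ K := by rw [hu2]; exact div_mem hζK hζcK
  have hv2K : v ^ 2 ∈ K := by rw [hv2]; exact div_mem hρK hρcK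
  -- adjoin u
  obtain ⟨hfdL1, hL1⟩ := adjoin_sq K u hu2K
  set L1 : IntermediateField ℚ ℂ := (K⟮u⟯).restrictScalars ℚ with hL1def
  have hKL1 : K ≤ L1 := by
    intro z hz
    exact (IntermediateField.mem_restrictScalars ℚ).mpr (K⟮u⟯.algebraMap_mem ⟨z, hz⟩)
  have huL1 : u ∈ L1 :=
    (IntermediateField.mem_restrictScalars ℚ).mpr (IntermediateField.mem_adjoin_simple_self K u)
  -- adjoin v
  have hv2L1 : v ^ 2 ∈ L1 := hKL1 hv2K
  obtain ⟨hfdL2, hL2⟩ := adjoin_sq L1 v hv2L1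
  set L2 : IntermediateField ℚ ℂ := (L1⟮v⟯).restrictScalars ℚ with hL2def
  have hL1L2 : L1 ≤ L2 := by
    intro z hz
    exact (IntermediateField.mem_restrictScalars ℚ).mpr (L1⟮v⟯.algebraMap_mem ⟨z, hz⟩)
  have hvL2 : v ∈ L2 :=
    (IntermediateField.mem_restrictScalars ℚ).mpr (IntermediateField.mem_adjoin_simple_self L1 v)
  have huL2 : u ∈ L2 := hL1L2 huL1
  -- assemble
  refine ⟨L2.toSubfield, ?_, ?_, huL2, hvL2⟩
  · let eL : L2.toSubfield ≃+* L2 :=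
      { toFun := fun x => ⟨x.1, x.2⟩
        invFun := fun x => ⟨x.1, x.2⟩
        left_inv := fun x => rfl
        right_inv := fun x => rfl
        map_mul' := fun x y => rfl
        map_add' := fun x y => rfl }
    exact Module.Finite.equiv (ratLinearEquivOfRingEquiv eL).symm
  · let eL : L2.toSubfield ≃+* L2 :=
      { toFun := fun x => ⟨x.1, x.2⟩
        invFun := fun x => ⟨x.1, x.2⟩
        left_inv := fun x => rfl
        right_inv := fun x => rfl
        map_mul' := fun x y => rfl
        map_add' := fun x y => rfl }
    have : Module.finrank ℚ L2.toSubfield = Module.finrank ℚ L2 :=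
      (ratLinearEquivOfRingEquiv eL).finrank_eq
    rw [this]
    calc Module.finrank ℚ L2 ≤ 2 * Module.finrank ℚ L1 := hL2
      _ ≤ 2 * (2 * Module.finrank ℚ K) := by
          exact Nat.mul_le_mul_left 2 hL1
      _ ≤ 2 * (2 * d ^ 2) := by
          exact Nat.mul_le_mul_left 2 (Nat.mul_le_mul_left 2 hdK)
      _ = 4 * d ^ 2 := by ring
end

section
/- Let d ≥ 2, let C ⊂ ℝ^d be a closed convex body symmetric with respect to the origin (bounded with nonempty interior), and let Λ < ℝ^d be a full-rank lattice. Let m₁ ≤ m₂ ≤ … ≤ m_d denote the successive minima of C with respect to Λ, i.e. m_i = inf{m > 0 : mC contains i linearly independent vectors of Λ}. Then there exists a ℤ-basis w¹, …, w^d of Λ such that w^i ∈ (3/2)^{i−1}·m_i·C for every i = 1, …, d. -/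
open scoped Pointwise

open Set Submodule Bornology

private lemma aux_latticeFinite {E : Type*} [NormedAddCommGroup E] [NormedSpace ℝ E]
    [ProperSpace E] (Λ : AddSubgroup E) [DiscreteTopology Λ] {s : Set E}
    (hsub : s ⊆ (Λ : Set E)) (hb : Bornology.IsBounded s) : s.Finite := by
  obtain ⟨R, hR⟩ := hb.subset_closedBall 0
  have hclosed : IsClosed (Λ : Set E) := AddSubgroup.isClosed_of_discrete
  have hK : IsCompact ((Λ : Set E) ∩ Metric.closedBall 0 R) :=
    (isCompact_closedBall 0 R).inter_left hclosed
  have hdiscΛ : DiscreteTopology ((Λ : Set E) : Set E) := by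
    exact ‹DiscreteTopology Λ›
  have hdisc2 : DiscreteTopology (((Λ : Set E) ∩ Metric.closedBall 0 R : Set E)) :=
    DiscreteTopology.of_subset hdiscΛ Set.inter_subset_left
  exact (hK.finite ⟨hdisc2⟩).subset (Set.subset_inter hsub hR)

private lemma aux_gauge_abs_smul {E : Type*} [AddCommGroup E] [Module ℝ E]
    {C : Set E} (hsym : ∀ x ∈ C, -x ∈ C) (r : ℝ) (x : E) :
    gauge C (r • x) = |r| * gauge C x := by
  rcases le_or_gt 0 r with h | h
  · rw [abs_of_nonneg h, gauge_smul_of_nonneg h, smul_eq_mul]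
  · have h2 : r • x = -((-r) • x) := by rw [neg_smul, neg_neg]
    rw [h2, gauge_neg hsym, gauge_smul_of_nonneg (by linarith), smul_eq_mul, abs_of_neg h]

private lemma aux_gauge_sum {E : Type*} [AddCommGroup E] [Module ℝ E]
    {C : Set E} (hconv : Convex ℝ C) (habs : Absorbent ℝ C) {ι : Type*} (t : Finset ι)
    (f : ι → E) : gauge C (∑ j ∈ t, f j) ≤ ∑ j ∈ t, gauge C (f j) := by
  induction t using Finset.cons_induction with
  | empty => simp
  | cons a t ha ih =>
    rw [Finset.sum_cons, Finset.sum_cons]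
    exact (gauge_add_le hconv habs _ _).trans (add_le_add_right ih _)

set_option maxHeartbeats 2000000 in
/-- **A basis realizing the successive minima up to factors `(3/2)^i`**
(the lemma in the appendix of the paper). Let `C ⊂ ℝ^d` (`d ≥ 2`) be a closed, bounded,
origin-symmetric convex body and let `Λ` be a full-rank lattice in `ℝ^d`. If
`m₁ ≤ ⋯ ≤ m_d` are the successive minima of `C` with respect to `Λ`, then there is a
`ℤ`-basis `w¹, …, w^d` of `Λ` with `w^i ∈ (3/2)^{i-1}·m_i·C` for all `i`. -/
theorem basis_of_successive_minima (d : ℕ) (hd : 2 ≤ d)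
    (C : Set (EuclideanSpace ℝ (Fin d)))
    (hCconv : Convex ℝ C) (hCclosed : IsClosed C) (hCsymm : ∀ x ∈ C, -x ∈ C)
    (hCbdd : Bornology.IsBounded C) (hCint : (interior C).Nonempty)
    (Λ : AddSubgroup (EuclideanSpace ℝ (Fin d))) (hdisc : DiscreteTopology Λ)
    (hspan : Submodule.span ℝ (Λ : Set (EuclideanSpace ℝ (Fin d))) = ⊤)
    (m : Fin d → ℝ)
    (hm : ∀ i : Fin d, m i = sInf {t : ℝ | 0 < t ∧
      ∃ v : Fin (i + 1) → EuclideanSpace ℝ (Fin d),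
        (∀ j, v j ∈ Λ ∧ v j ∈ t • C) ∧ LinearIndependent ℝ v}) :
    ∃ b : Module.Basis (Fin d) ℤ Λ, ∀ i : Fin d,
      ((b i : EuclideanSpace ℝ (Fin d)) ∈ ((3 / 2 : ℝ) ^ (i : ℕ) * m i) • C) := by
  classical
  have hE : (0:ℕ) = 0 := rfl
  -- basic facts about `C`
  have h0mem : (0 : EuclideanSpace ℝ (Fin d)) ∈ interior C := by
    obtain ⟨x, hx⟩ := hCint
    have hxC : -x ∈ C := hCsymm x (interior_subset hx)
    have := hCconv.combo_interior_self_mem_interior hx hxC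
      (by norm_num : (0:ℝ) < (1:ℝ)/2) (by norm_num : (0:ℝ) ≤ (1:ℝ)/2) (by norm_num)
    have h0 : (1/2:ℝ) • x + (1/2:ℝ) • (-x) = (0 : EuclideanSpace ℝ (Fin d)) := by
      rw [smul_neg, add_neg_cancel]
    rwa [h0] at this
  have hC0nhds : C ∈ nhds (0 : EuclideanSpace ℝ (Fin d)) := mem_interior_iff_mem_nhds.1 h0mem
  have habs : Absorbent ℝ C := absorbent_nhds_zero hC0nhds
  have h0C : (0 : EuclideanSpace ℝ (Fin d)) ∈ C := interior_subset h0mem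
  -- membership vs gauge
  have hmem_iff : ∀ {t : ℝ} {x : EuclideanSpace ℝ (Fin d)}, 0 < t → (x ∈ t • C ↔ gauge C x ≤ t) := by
    intro t x ht
    constructor
    · exact fun h => gauge_le_of_mem ht.le h
    · intro h
      have h1 : gauge C (t⁻¹ • x) ≤ 1 := by
        rw [gauge_smul_of_nonneg (inv_nonneg.2 ht.le), smul_eq_mul]
        have h2 : t⁻¹ * gauge C x ≤ t⁻¹ * t :=
          mul_le_mul_of_nonneg_left h (inv_nonneg.2 ht.le)
        rwa [inv_mul_cancel₀ ht.ne'] at h2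
      have h2 : t⁻¹ • x ∈ closure C := (gauge_le_one_iff_mem_closure hCconv hC0nhds).1 h1
      rw [hCclosed.closure_eq] at h2
      rwa [Set.mem_smul_set_iff_inv_smul_mem₀ ht.ne']
  -- norm bound
  obtain ⟨R0, hR0⟩ := isBounded_iff_forall_norm_le.1 hCbdd
  set R : ℝ := max R0 1 with hRdef
  have hRpos : 0 < R := lt_of_lt_of_le one_pos (le_max_right _ _)
  have hR : ∀ y ∈ C, ‖y‖ ≤ R := fun y hy => (hR0 y hy).trans (le_max_left _ _)
  have hnorm_le : ∀ {x : EuclideanSpace ℝ (Fin d)} {t : ℝ}, 0 < t → gauge C x ≤ t → ‖x‖ ≤ t * R := by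
    intro x t ht hg
    obtain ⟨y, hy, rfl⟩ := (hmem_iff ht).2 hg
    rw [norm_smul, Real.norm_eq_abs, abs_of_pos ht]
    exact mul_le_mul_of_nonneg_left (hR y hy) ht.le
  -- finiteness of bounded subsets of the lattice
  have hlatfin : ∀ s : Set (EuclideanSpace ℝ (Fin d)), s ⊆ (Λ : Set (EuclideanSpace ℝ (Fin d))) → Bornology.IsBounded s → s.Finite :=
    fun s hs hb => aux_latticeFinite Λ hs hb
  -- minimal norm of nonzero lattice vectors
  obtain ⟨r, hrpos, hrmin⟩ : ∃ r > 0, ∀ x ∈ Λ, x ≠ 0 → r ≤ ‖x‖ := by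
    have hfin : ({x : EuclideanSpace ℝ (Fin d) | x ∈ Λ ∧ ‖x‖ ≤ 1 ∧ x ≠ 0}).Finite := by
      apply hlatfin _ (fun x hx => hx.1)
      apply (Metric.isBounded_closedBall (x := (0:EuclideanSpace ℝ (Fin d))) (r := 1)).subset
      intro x hx
      simpa [Metric.mem_closedBall, dist_eq_norm] using hx.2.1
    by_cases hne : ({x : EuclideanSpace ℝ (Fin d) | x ∈ Λ ∧ ‖x‖ ≤ 1 ∧ x ≠ 0}).Nonempty
    · have hFnne : (hfin.toFinset.image (fun x => ‖x‖)).Nonempty := by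
        obtain ⟨x, hx⟩ := hne
        exact ⟨‖x‖, Finset.mem_image_of_mem _ (hfin.mem_toFinset.2 hx)⟩
      obtain ⟨x0, hx0, hx0r⟩ :=
        Finset.mem_image.1 ((hfin.toFinset.image (fun x => ‖x‖)).min'_mem hFnne)
      have hx0' := hfin.mem_toFinset.1 hx0
      refine ⟨(hfin.toFinset.image (fun x => ‖x‖)).min' hFnne, ?_, ?_⟩
      · rw [← hx0r]; exact norm_pos_iff.2 hx0'.2.2
      · intro x hxΛ hx0ne
        rcases le_or_gt ‖x‖ 1 with h1 | h1
        · exact Finset.min'_le _ _ (Finset.mem_image_of_mem _ (hfin.mem_toFinset.2 ⟨hxΛ, h1, hx0ne⟩))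
        · calc (hfin.toFinset.image (fun x => ‖x‖)).min' hFnne ≤ ‖x0‖ := le_of_eq hx0r.symm
            _ ≤ 1 := hx0'.2.1
            _ ≤ ‖x‖ := h1.le
    · refine ⟨1, one_pos, fun x hxΛ hx0 => ?_⟩
      by_contra hlt
      push_neg at hlt
      exact hne ⟨x, hxΛ, hlt.le, hx0⟩
  -- the sets of admissible scalars
  set S : Fin d → Set ℝ := fun i => {t : ℝ | 0 < t ∧
      ∃ v : Fin (i + 1) → EuclideanSpace ℝ (Fin d),
        (∀ j, v j ∈ Λ ∧ v j ∈ t • C) ∧ LinearIndependent ℝ v} with hS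
  have hmS : ∀ i, m i = sInf (S i) := hm
  -- a linearly independent family inside Λ
  obtain ⟨bb, hbbmem, hbbli⟩ : ∃ bb : Fin d → EuclideanSpace ℝ (Fin d), (∀ j, bb j ∈ Λ) ∧ LinearIndependent ℝ bb := by
    obtain ⟨b, hbsub, hbspan, hbli⟩ := exists_linearIndependent ℝ (Λ : Set (EuclideanSpace ℝ (Fin d)))
    rw [hspan] at hbspan
    have hbfin : b.Finite := hbli.setFinite
    have : Fintype b := hbfin.fintype
    have hcard : Fintype.card b = d := by
      have h2 := finrank_span_eq_card hbli
      rw [Subtype.range_coe, hbspan, finrank_top] at h2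
      rw [← h2, finrank_euclideanSpace_fin]
    have hequiv : Fin d ≃ b := (Fintype.equivFinOfCardEq hcard).symm
    refine ⟨fun j => ((hequiv j : b) : EuclideanSpace ℝ (Fin d)), fun j => hbsub (hequiv j).2, ?_⟩
    exact hbli.comp hequiv hequiv.injective
  -- nonemptiness of S i
  have hSne : ∀ i : Fin d, (S i).Nonempty := by
    intro i
    set t0 : ℝ := 1 + ∑ j, gauge C (bb j) with ht0
    have ht0pos : 0 < t0 := by
      have : (0:ℝ) ≤ ∑ j, gauge C (bb j) :=
        Finset.sum_nonneg (fun j _ => gauge_nonneg _)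
      linarith
    refine ⟨t0, ht0pos, fun j => bb (Fin.castLE i.isLt j), fun j => ⟨hbbmem _, ?_⟩,
      hbbli.comp _ (Fin.castLE_injective _)⟩
    apply (hmem_iff ht0pos).2
    have h1 : gauge C (bb (Fin.castLE i.isLt j)) ≤ ∑ j', gauge C (bb j') :=
      Finset.single_le_sum (fun j' _ => gauge_nonneg _) (Finset.mem_univ _)
    linarith
  -- lower bound on S i
  have hSlb : ∀ i : Fin d, ∀ t ∈ S i, r / R ≤ t := by
    rintro i t ⟨htpos, vv, hvv, hvvli⟩
    have h0 : vv 0 ≠ 0 := hvvli.ne_zero 0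
    have h1 : gauge C (vv 0) ≤ t := (hmem_iff htpos).1 (hvv 0).2
    have h2 : ‖vv 0‖ ≤ t * R := hnorm_le htpos h1
    have h3 : r ≤ ‖vv 0‖ := hrmin _ (hvv 0).1 h0
    rw [div_le_iff₀ hRpos]
    linarith
  have hbddS : ∀ i : Fin d, BddBelow (S i) := fun i => ⟨r/R, hSlb i⟩
  have hmpos : ∀ i : Fin d, 0 < m i := by
    intro i
    have h1 : r / R ≤ m i := by
      rw [hmS i]; exact le_csInf (hSne i) (hSlb i)
    have : 0 < r / R := div_pos hrpos hRpos
    linarith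
  -- monotonicity of m
  have hmono : ∀ i i' : Fin d, i ≤ i' → m i ≤ m i' := by
    intro i i' hii
    rw [hmS i, hmS i']
    apply csInf_le_csInf (hbddS i) (hSne i')
    rintro t ⟨htpos, vv, hvv, hvvli⟩
    have hle : (i:ℕ) + 1 ≤ (i':ℕ) + 1 := by
      have h3 : (i:ℕ) ≤ (i':ℕ) := hii
      omega
    exact ⟨htpos, vv ∘ Fin.castLE hle, fun j => hvv _, hvvli.comp _ (Fin.castLE_injective _)⟩
  -- attainment of the successive minima
  have hattain : ∀ i : Fin d, ∃ vv : Fin ((i:ℕ) + 1) → EuclideanSpace ℝ (Fin d),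
      LinearIndependent ℝ vv ∧ ∀ j, vv j ∈ Λ ∧ gauge C (vv j) ≤ m i := by
    intro i
    have hmi : 0 < m i := hmpos i
    have hub : ∀ n : ℕ, ∃ t ∈ S i, t < m i + 1/(n+1) := by
      intro n
      apply exists_lt_of_csInf_lt (hSne i)
      rw [← hmS i]
      have h1 : (0:ℝ) < 1/(n+1) := by positivity
      linarith
    choose t htS htlt using hub
    have htpos : ∀ n, 0 < t n := fun n => (htS n).1
    choose vvs hvvs hvvli using fun n => (htS n).2
    have hgb : ∀ n j, gauge C (vvs n j) ≤ t n := fun n j =>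
      (hmem_iff (htpos n)).1 (hvvs n j).2
    have htle : ∀ n, t n ≤ m i + 1 := by
      intro n
      have h1 : (1:ℝ)/(n+1) ≤ 1 := by
        rw [div_le_one (by positivity)]
        have h2 : (0:ℝ) ≤ n := Nat.cast_nonneg n
        linarith
      have h3 := htlt n
      linarith
    have hGfin : ({x : EuclideanSpace ℝ (Fin d) | x ∈ Λ ∧ gauge C x ≤ m i + 1}).Finite := by
      apply hlatfin _ (fun x hx => hx.1)
      rw [isBounded_iff_forall_norm_le]
      exact ⟨(m i + 1) * R, fun x hx => hnorm_le (by linarith) hx.2⟩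
    have hGsub : Finite ({x : EuclideanSpace ℝ (Fin d) | x ∈ Λ ∧ gauge C x ≤ m i + 1}) :=
      hGfin.to_subtype
    set ψ : ℕ → (Fin ((i:ℕ)+1) → ({x : EuclideanSpace ℝ (Fin d) | x ∈ Λ ∧ gauge C x ≤ m i + 1})) :=
      fun n j => ⟨vvs n j, (hvvs n j).1, (hgb n j).trans (htle n)⟩ with hψ
    obtain ⟨f, hf⟩ := Finite.exists_infinite_fiber ψ
    have hfI : (ψ ⁻¹' {f}).Infinite := Set.infinite_coe_iff.1 hf
    refine ⟨fun j => (f j : EuclideanSpace ℝ (Fin d)), ?_, ?_⟩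
    · obtain ⟨n, hn⟩ := hfI.nonempty
      have hn' : ψ n = f := hn
      have h4 : vvs n = fun j => (f j : EuclideanSpace ℝ (Fin d)) := by
        funext j
        exact congrArg Subtype.val (congrFun hn' j)
      rw [← h4]
      exact hvvli n
    · intro j
      refine ⟨(f j).2.1, ?_⟩
      by_contra hlt
      push_neg at hlt
      obtain ⟨N, hN⟩ := exists_nat_one_div_lt (sub_pos.2 hlt)
      obtain ⟨n, hnI, hn⟩ := hfI.exists_gt N
      have hn' : ψ n = f := hnI
      have h1 : vvs n j = (f j : EuclideanSpace ℝ (Fin d)) := congrArg Subtype.val (congrFun hn' j)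
      have h2 : gauge C ((f j : EuclideanSpace ℝ (Fin d))) ≤ t n := h1 ▸ hgb n j
      have h3 : (1:ℝ)/(n+1) ≤ 1/(N+1) := by
        apply one_div_le_one_div_of_le (by positivity)
        have h5 : (N:ℝ) ≤ n := by exact_mod_cast hn.le
        linarith
      have h6 := htlt n
      linarith
  -- a linearly independent family realizing the successive minima
  obtain ⟨v, hvli, hvmem⟩ : ∃ v : Fin d → EuclideanSpace ℝ (Fin d), LinearIndependent ℝ v ∧
      ∀ i, v i ∈ Λ ∧ gauge C (v i) ≤ m i := by
    have key : ∀ k, ∀ hk : k ≤ d, ∃ v : Fin k → EuclideanSpace ℝ (Fin d),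
        LinearIndependent ℝ v ∧ ∀ j : Fin k, v j ∈ Λ ∧ gauge C (v j) ≤ m (Fin.castLE hk j) := by
      intro k
      induction k with
      | zero =>
        intro hk
        exact ⟨fun j => j.elim0, linearIndependent_empty_type, fun j => j.elim0⟩
      | succ k IH =>
        intro hk1
        have hk : k ≤ d := Nat.le_of_succ_le hk1
        obtain ⟨v0, hv0li, hv0⟩ := IH hk
        obtain ⟨vv, hvvli, hvvmem⟩ := hattain ⟨k, hk1⟩
        have hj : ∃ j, vv j ∉ Submodule.span ℝ (Set.range v0) := by
          by_contra hcon
          push_neg at hcon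
          have hli2 : LinearIndependent ℝ
              (fun j => (⟨vv j, hcon j⟩ : Submodule.span ℝ (Set.range v0))) := by
            apply LinearIndependent.of_comp (Submodule.span ℝ (Set.range v0)).subtype
            exact hvvli
          have hcard := hli2.fintype_card_le_finrank
          rw [finrank_span_eq_card hv0li] at hcard
          simp at hcard
        obtain ⟨j, hjnot⟩ := hj
        refine ⟨Fin.snoc v0 (vv j), linearIndependent_fin_snoc.2 ⟨hv0li, hjnot⟩, ?_⟩
        intro j'
        refine Fin.lastCases ?_ ?_ j'
        · rw [Fin.snoc_last]
          exact hvvmem j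
        · intro j0
          rw [Fin.snoc_castSucc]
          exact hv0 j0
    obtain ⟨v, h1, h2⟩ := key d le_rfl
    exact ⟨v, h1, fun i => h2 i⟩
  -- the key induction
  have KEY : ∀ k, ∀ hk : k ≤ d, ∃ w : Fin k → EuclideanSpace ℝ (Fin d), LinearIndependent ℝ w ∧ (∀ j, w j ∈ Λ) ∧
      (∀ j : Fin k, gauge C (w j) ≤ (3/2 : ℝ) ^ (j:ℕ) * m (Fin.castLE hk j)) ∧
      Submodule.span ℤ (Set.range w) = AddSubgroup.toIntSubmodule Λ ⊓
        (Submodule.span ℝ (Set.range (v ∘ Fin.castLE hk))).restrictScalars ℤ := by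
    intro k
    induction k with
    | zero =>
      intro hk
      refine ⟨fun j => j.elim0, linearIndependent_empty_type, fun j => j.elim0,
        fun j => j.elim0, ?_⟩
      rw [Set.range_eq_empty, Set.range_eq_empty, Submodule.span_empty, Submodule.span_empty]
      simp
    | succ k IH =>
      intro hk1
      have hk : k ≤ d := Nat.le_of_succ_le hk1
      obtain ⟨w, hwli, hwΛ, hwg, hwspan⟩ := IH hk
      set i : Fin d := ⟨k, hk1⟩ with hi
      set vk := v i with hvkdef
      have hwVk : ∀ j, w j ∈ Submodule.span ℝ (Set.range (v ∘ Fin.castLE hk)) := by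
        intro j
        have h1 : w j ∈ Submodule.span ℤ (Set.range w) := Submodule.subset_span ⟨j, rfl⟩
        rw [hwspan] at h1
        exact h1.2
      have hspanw_le : Submodule.span ℝ (Set.range w) ≤
          Submodule.span ℝ (Set.range (v ∘ Fin.castLE hk)) :=
        Submodule.span_le.2 (Set.range_subset_iff.2 hwVk)
      have hvknot : vk ∉ Submodule.span ℝ (Set.range (v ∘ Fin.castLE hk)) := by
        rw [Set.range_comp]
        apply hvli.notMem_span_image
        rintro ⟨j, hj⟩
        have h1 : (j:ℕ) = k := congrArg Fin.val hj
        omega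
      -- the family u
      set u : Fin (k+1) → EuclideanSpace ℝ (Fin d) := Fin.snoc w vk with hu
      have hu_ca : ∀ j : Fin k, u j.castSucc = w j := by
        intro j; rw [hu]; simp
      have hu_la : u (Fin.last k) = vk := by
        rw [hu]; simp
      have huli : LinearIndependent ℝ u :=
        linearIndependent_fin_snoc.2 ⟨hwli, fun h => hvknot (hspanw_le h)⟩
      have hsli : LinearIndepOn ℝ id (Set.range u) :=
        huli.linearIndepOn_id
      set B := Module.Basis.extend hsli with hB
      have hmemext : ∀ j : Fin (k+1), u j ∈ hsli.extend (Set.subset_univ _) :=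
        fun j => hsli.subset_extend _ ⟨j, rfl⟩
      set e : Fin (k+1) → hsli.extend (Set.subset_univ _) := fun j => ⟨u j, hmemext j⟩ with he
      have hBe : ∀ j, B (e j) = u j := fun j => Module.Basis.extend_apply_self hsli (e j)
      have heinj : Function.Injective e := by
        intro a b hab
        exact huli.injective (congrArg Subtype.val hab)
      set cf : Fin (k+1) → (EuclideanSpace ℝ (Fin d) →ₗ[ℝ] ℝ) :=
        fun j => B.coord (e j) with hcf0
      have hcf : ∀ j j' : Fin (k+1), cf j (u j') = if j' = j then 1 else 0 := by
        intro j j'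
        have h1 : cf j (u j') = B.repr (B (e j')) (e j) := by rw [hBe]; rfl
        rw [h1, Module.Basis.repr_self, Finsupp.single_apply]
        simp [heinj.eq_iff]
      have hcfw : ∀ (j : Fin (k+1)) (j' : Fin k),
          cf j (w j') = if j'.castSucc = j then 1 else 0 := by
        intro j j'
        rw [← hu_ca j']
        exact hcf j j'.castSucc
      have hcfvk : cf (Fin.last k) vk = 1 := by
        have h1 := hcf (Fin.last k) (Fin.last k)
        rw [hu_la] at h1
        rw [h1]
        simp
      have hdecomp : ∀ x ∈ Submodule.span ℝ (Set.range u), ∑ j, cf j x • u j = x := by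
        intro x hx
        obtain ⟨c, hc⟩ := (mem_span_range_iff_exists_fun ℝ).1 hx
        have hcf_eval : ∀ j, cf j x = c j := by
          intro j
          rw [← hc, map_sum]
          rw [Finset.sum_congr rfl (fun j' _ => by
            rw [map_smul, hcf j j', smul_eq_mul])]
          simp
        rw [Finset.sum_congr rfl (fun j _ => by rw [hcf_eval j])]
        exact hc
      have hwV : ∀ j, w j ∈ Submodule.span ℝ (Set.range u) := fun j => by
        rw [← hu_ca j]; exact Submodule.subset_span ⟨j.castSucc, rfl⟩
      have hvkV : vk ∈ Submodule.span ℝ (Set.range u) :=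
        Submodule.subset_span ⟨Fin.last k, hu_la⟩
      have hspanwV : Submodule.span ℝ (Set.range w) ≤ Submodule.span ℝ (Set.range u) :=
        Submodule.span_le.2 (Set.range_subset_iff.2 hwV)
      have hVkleV : Submodule.span ℝ (Set.range (v ∘ Fin.castLE hk)) ≤
          Submodule.span ℝ (Set.range u) := by
        apply Submodule.span_le.2
        rintro x ⟨j, rfl⟩
        have h1 : (v ∘ Fin.castLE hk) j ∈ Submodule.span ℤ (Set.range w) := by
          rw [hwspan]
          exact ⟨(hvmem _).1, Submodule.subset_span ⟨j, rfl⟩⟩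
        have h2 : (v ∘ Fin.castLE hk) j ∈ Submodule.span ℝ (Set.range w) :=
          Submodule.span_le_restrictScalars ℤ ℝ _ h1
        exact hspanwV h2
      have hVeq : Submodule.span ℝ (Set.range (v ∘ Fin.castLE hk1)) =
          Submodule.span ℝ (Set.range u) := by
        apply le_antisymm
        · apply Submodule.span_le.2
          rintro x ⟨j, rfl⟩
          refine Fin.lastCases ?_ ?_ j
          · show v (Fin.castLE hk1 (Fin.last k)) ∈ _
            have hcast : Fin.castLE hk1 (Fin.last k) = i := rfl
            rw [hcast]
            exact hvkV
          · intro j0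
            show v (Fin.castLE hk1 j0.castSucc) ∈ _
            have hcast : Fin.castLE hk1 j0.castSucc = Fin.castLE hk j0 := rfl
            rw [hcast]
            exact hVkleV (Submodule.subset_span ⟨j0, rfl⟩)
        · apply Submodule.span_le.2
          rintro x ⟨j, rfl⟩
          refine Fin.lastCases ?_ ?_ j
          · rw [hu_la]
            exact Submodule.subset_span ⟨Fin.last k, rfl⟩
          · intro j0
            rw [hu_ca j0]
            have h1 : Submodule.span ℝ (Set.range (v ∘ Fin.castLE hk)) ≤
                Submodule.span ℝ (Set.range (v ∘ Fin.castLE hk1)) := by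
              apply Submodule.span_le.2
              rintro y ⟨j1, rfl⟩
              exact Submodule.subset_span ⟨j1.castSucc, rfl⟩
            exact h1 (hwVk j0)
      have hker : ∀ x ∈ Submodule.span ℝ (Set.range u), cf (Fin.last k) x = 0 →
          x ∈ Submodule.span ℝ (Set.range w) := by
        intro x hxV hx0
        have hd2 := hdecomp x hxV
        rw [Fin.sum_univ_castSucc] at hd2
        rw [hx0, zero_smul, add_zero] at hd2
        rw [← hd2]
        exact Submodule.sum_mem _ (fun j _ => Submodule.smul_mem _ _
          (by rw [hu_ca]; exact Submodule.subset_span ⟨j, rfl⟩))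
      have hcfspanw : ∀ x ∈ Submodule.span ℝ (Set.range w), cf (Fin.last k) x = 0 := by
        intro x hx
        obtain ⟨c, hc⟩ := (mem_span_range_iff_exists_fun ℝ).1 hx
        rw [← hc, map_sum]
        apply Finset.sum_eq_zero
        intro j _
        rw [map_smul, hcfw, if_neg (Fin.castSucc_lt_last j).ne, smul_zero]
      -- the finite fundamental set
      set F : Set (EuclideanSpace ℝ (Fin d)) := {z | z ∈ Λ ∧ z ∈ Submodule.span ℝ (Set.range u) ∧
          (∀ j : Fin k, |cf j.castSucc z| ≤ 1/2) ∧ |cf (Fin.last k) z| ≤ 1} with hFdef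
      -- reduction into F
      have hredux : ∀ x, x ∈ Λ → x ∈ Submodule.span ℝ (Set.range u) →
          |cf (Fin.last k) x| ≤ 1 →
          ∃ y, y ∈ F ∧ cf (Fin.last k) y = cf (Fin.last k) x ∧
            x - y ∈ Submodule.span ℤ (Set.range w) := by
        intro x hxΛ hxV hx1
        set z := ∑ j : Fin k, ((round (cf j.castSucc x) : ℤ) : ℝ) • w j with hzdef
        have hzΛ : z ∈ Λ := by
          apply AddSubgroup.sum_mem
          intro j _
          rw [Int.cast_smul_eq_zsmul]
          exact AddSubgroup.zsmul_mem _ (hwΛ j) _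
        have hzV : z ∈ Submodule.span ℝ (Set.range u) :=
          Submodule.sum_mem _ (fun j _ => Submodule.smul_mem _ _ (hwV j))
        have hzspan : z ∈ Submodule.span ℤ (Set.range w) := by
          apply Submodule.sum_mem
          intro j _
          rw [Int.cast_smul_eq_zsmul]
          exact Submodule.smul_mem _ _ (Submodule.subset_span ⟨j, rfl⟩)
        have hcfz : ∀ jj, cf jj z = ∑ j : Fin k,
            ((round (cf j.castSucc x) : ℤ) : ℝ) * (if j.castSucc = jj then 1 else 0) := by
          intro jj
          rw [hzdef, map_sum]
          exact Finset.sum_congr rfl (fun j _ => by rw [map_smul, hcfw, smul_eq_mul])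
        have hcflast : cf (Fin.last k) z = 0 := by
          rw [hcfz]
          apply Finset.sum_eq_zero
          intro j _
          rw [if_neg (Fin.castSucc_lt_last j).ne, mul_zero]
        have hcfj : ∀ j : Fin k, cf j.castSucc z = ((round (cf j.castSucc x) : ℤ) : ℝ) := by
          intro j
          rw [hcfz]
          simp [Fin.castSucc_inj]
        refine ⟨x - z, ⟨Λ.sub_mem hxΛ hzΛ, Submodule.sub_mem _ hxV hzV, ?_, ?_⟩, ?_, ?_⟩
        · intro j
          rw [map_sub, hcfj j]
          exact abs_sub_round _
        · rw [map_sub, hcflast, sub_zero]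
          exact hx1
        · rw [map_sub, hcflast, sub_zero]
        · rw [sub_sub_cancel]
          exact hzspan
      have hFfin : F.Finite := by
        apply hlatfin _ (fun z hz => hz.1)
        rw [isBounded_iff_forall_norm_le]
        refine ⟨∑ j, ‖u j‖, ?_⟩
        intro z hz
        rw [← hdecomp z hz.2.1]
        refine (norm_sum_le _ _).trans ?_
        apply Finset.sum_le_sum
        intro j _
        rw [norm_smul, Real.norm_eq_abs]
        have h1 : |cf j z| ≤ 1 := by
          refine Fin.lastCases ?_ ?_ j
          · exact hz.2.2.2
          · intro j0
            exact (hz.2.2.1 j0).trans (by norm_num)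
        calc |cf j z| * ‖u j‖ ≤ 1 * ‖u j‖ :=
            mul_le_mul_of_nonneg_right h1 (norm_nonneg _)
          _ = ‖u j‖ := one_mul _
      set T : Set ℝ := (fun z => cf (Fin.last k) z) '' F ∩ Set.Ioi (0:ℝ) with hTdef
      have hTfin : T.Finite := (hFfin.image _).inter_of_left _
      have h1T : (1:ℝ) ∈ T := by
        obtain ⟨y, hyF, hy1, _⟩ := hredux vk ((hvmem i).1) hvkV (by rw [hcfvk]; norm_num)
        refine ⟨⟨y, hyF, ?_⟩, by norm_num⟩
        show cf (Fin.last k) y = 1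
        rw [hy1, hcfvk]
      have hTfne : hTfin.toFinset.Nonempty := ⟨1, hTfin.mem_toFinset.2 h1T⟩
      obtain ⟨θ, hθT, hθle⟩ : ∃ θ, θ ∈ T ∧ ∀ a ∈ T, θ ≤ a :=
        ⟨hTfin.toFinset.min' hTfne, hTfin.mem_toFinset.1 (Finset.min'_mem _ _),
          fun a ha => Finset.min'_le _ _ (hTfin.mem_toFinset.2 ha)⟩
      obtain ⟨ws, hwsF0, hwsθ0⟩ := hθT.1
      have hwsθ : cf (Fin.last k) ws = θ := hwsθ0
      have hwsF : ws ∈ Λ ∧ ws ∈ Submodule.span ℝ (Set.range u) ∧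
          (∀ j : Fin k, |cf j.castSucc ws| ≤ 1/2) ∧ |cf (Fin.last k) ws| ≤ 1 := hwsF0
      have hθpos : 0 < θ := hθT.2
      have hθ1 : θ ≤ 1 := hθle 1 h1T
      -- generation
      have hclass : ∀ x, x ∈ Λ → x ∈ Submodule.span ℝ (Set.range u) →
          ∃ n : ℤ, x - n • ws ∈ Submodule.span ℤ (Set.range w) := by
        intro x hxΛ hxV
        set a := cf (Fin.last k) x with ha
        set n := ⌊a / θ⌋ with hn
        have h1 : (n:ℝ) * θ ≤ a := by
          have h2 := Int.floor_le (a/θ)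
          calc (n:ℝ) * θ ≤ (a/θ) * θ := mul_le_mul_of_nonneg_right h2 hθpos.le
            _ = a := div_mul_cancel₀ a hθpos.ne'
        have h2 : a - n*θ < θ := by
          have h3 := Int.lt_floor_add_one (a/θ)
          have h4 : a / θ * θ < ((n:ℝ) + 1) * θ := mul_lt_mul_of_pos_right h3 hθpos
          rw [div_mul_cancel₀ a hθpos.ne'] at h4
          linarith
        have hyΛ : x - n • ws ∈ Λ := Λ.sub_mem hxΛ (AddSubgroup.zsmul_mem _ hwsF.1 n)
        have hyV : x - n • ws ∈ Submodule.span ℝ (Set.range u) := by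
          have h5 : (n:ℝ) • ws ∈ Submodule.span ℝ (Set.range u) :=
            Submodule.smul_mem _ _ hwsF.2.1
          rw [Int.cast_smul_eq_zsmul] at h5
          exact Submodule.sub_mem _ hxV h5
        have hcy : cf (Fin.last k) (x - n • ws) = a - n * θ := by
          rw [map_sub, map_zsmul, hwsθ]
          push_cast [zsmul_eq_mul]
          ring
        rcases eq_or_lt_of_le (sub_nonneg.2 h1) with heq | hlt
        · refine ⟨n, ?_⟩
          have h6 : x - n • ws ∈ Submodule.span ℝ (Set.range w) :=
            hker _ hyV (by rw [hcy]; exact heq.symm)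
          rw [hwspan]
          exact Submodule.mem_inf.2 ⟨hyΛ, hspanw_le h6⟩
        · exfalso
          obtain ⟨y, hyF, hycf, _⟩ := hredux _ hyΛ hyV (by
            rw [hcy, abs_of_pos hlt]
            linarith)
          have hrT : a - n*θ ∈ T := by
            refine ⟨⟨y, hyF, ?_⟩, hlt⟩
            show cf (Fin.last k) y = a - n*θ
            rw [hycf, hcy]
          have h7 := hθle _ hrT
          linarith
      -- gauge bound for ws
      have hmi0 : 0 ≤ m i := (hmpos i).le
      have hgws : gauge C ws ≤ (3/2:ℝ)^k * m i := by
        have hd2 : ws = ∑ j, cf j ws • u j := (hdecomp ws hwsF.2.1).symm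
        have hb1 : gauge C ws ≤ ∑ j, |cf j ws| * gauge C (u j) := by
          calc gauge C ws = gauge C (∑ j, cf j ws • u j) := by rw [← hd2]
            _ ≤ ∑ j, gauge C (cf j ws • u j) := aux_gauge_sum hCconv habs _ _
            _ = ∑ j, |cf j ws| * gauge C (u j) :=
              Finset.sum_congr rfl (fun j _ => aux_gauge_abs_smul hCsymm _ _)
        rw [Fin.sum_univ_castSucc] at hb1
        have hterm : ∀ j : Fin k, |cf j.castSucc ws| * gauge C (u j.castSucc) ≤
            (1/2) * ((3/2:ℝ)^(j:ℕ) * m i) := by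
          intro j
          rw [hu_ca]
          have h1 : |cf j.castSucc ws| ≤ 1/2 := hwsF.2.2.1 j
          have h2 : gauge C (w j) ≤ (3/2:ℝ)^(j:ℕ) * m (Fin.castLE hk j) := hwg j
          have h3 : m (Fin.castLE hk j) ≤ m i := by
            apply hmono
            have h8 : ((Fin.castLE hk j) : ℕ) ≤ (i : ℕ) := by
              simp only [Fin.coe_castLE]
              exact j.isLt.le
            exact h8
          have h4 : gauge C (w j) ≤ (3/2:ℝ)^(j:ℕ) * m i :=
            h2.trans (mul_le_mul_of_nonneg_left h3 (by positivity))
          exact mul_le_mul h1 h4 (gauge_nonneg _) (by norm_num)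
        have hlastterm : |cf (Fin.last k) ws| * gauge C (u (Fin.last k)) ≤ m i := by
          rw [hu_la]
          have h1 : |cf (Fin.last k) ws| ≤ 1 := by
            rw [hwsθ, abs_of_pos hθpos]
            exact hθ1
          calc |cf (Fin.last k) ws| * gauge C vk ≤ 1 * m i :=
              mul_le_mul h1 (hvmem i).2 (gauge_nonneg _) one_pos.le
            _ = m i := one_mul _
        have hgeom : ∑ j : Fin k, (3/2:ℝ)^(j:ℕ) = 2 * ((3/2:ℝ)^k - 1) := by
          rw [Fin.sum_univ_eq_sum_range (fun n => (3/2:ℝ)^n)]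
          rw [geom_sum_eq (by norm_num : (3/2:ℝ) ≠ 1)]
          rw [div_eq_iff (by norm_num : (3/2:ℝ) - 1 ≠ 0)]
          ring
        have hsum : ∑ j : Fin k, (1/2) * ((3/2:ℝ)^(j:ℕ) * m i) = ((3/2:ℝ)^k - 1) * m i := by
          calc ∑ j : Fin k, (1/2) * ((3/2:ℝ)^(j:ℕ) * m i)
              = (∑ j : Fin k, (3/2:ℝ)^(j:ℕ)) * ((1/2) * m i) := by
                rw [Finset.sum_mul]
                exact Finset.sum_congr rfl (fun j _ => by ring)
            _ = ((3/2:ℝ)^k - 1) * m i := by rw [hgeom]; ring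
        have hsumle := Finset.sum_le_sum (fun (j : Fin k) (_ : j ∈ Finset.univ) => hterm j)
        calc gauge C ws ≤ (∑ j : Fin k, |cf j.castSucc ws| * gauge C (u j.castSucc)) +
              |cf (Fin.last k) ws| * gauge C (u (Fin.last k)) := hb1
          _ ≤ ((3/2:ℝ)^k - 1) * m i + m i := add_le_add (by rw [← hsum]; exact hsumle) hlastterm
          _ = (3/2:ℝ)^k * m i := by ring
      -- conclusion of the induction step
      have hwsnotspan : ws ∉ Submodule.span ℝ (Set.range w) := by
        intro hmem
        have h0 := hcfspanw ws hmem
        rw [hwsθ] at h0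
        exact hθpos.ne' h0
      refine ⟨Fin.snoc w ws, linearIndependent_fin_snoc.2 ⟨hwli, hwsnotspan⟩, ?_, ?_, ?_⟩
      · intro j
        refine Fin.lastCases ?_ ?_ j
        · rw [Fin.snoc_last]
          exact hwsF.1
        · intro j0
          rw [Fin.snoc_castSucc]
          exact hwΛ j0
      · intro j
        refine Fin.lastCases ?_ ?_ j
        · rw [Fin.snoc_last]
          have hcast : Fin.castLE hk1 (Fin.last k) = i := rfl
          rw [hcast]
          simpa using hgws
        · intro j0
          rw [Fin.snoc_castSucc]
          have hcast : Fin.castLE hk1 j0.castSucc = Fin.castLE hk j0 := rfl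
          rw [hcast]
          simpa using hwg j0
      · rw [hVeq]
        apply le_antisymm
        · rw [Submodule.span_le]
          rintro x ⟨j, rfl⟩
          refine Fin.lastCases ?_ ?_ j
          · rw [Fin.snoc_last]
            exact Submodule.mem_inf.2 ⟨hwsF.1, hwsF.2.1⟩
          · intro j0
            rw [Fin.snoc_castSucc]
            exact Submodule.mem_inf.2 ⟨hwΛ j0, hwV j0⟩
        · intro x hx
          obtain ⟨hxΛ, hxV⟩ := Submodule.mem_inf.1 hx
          obtain ⟨n, hn⟩ := hclass x hxΛ hxV
          have h1 : x - n • ws ∈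
              Submodule.span ℤ (Set.range (Fin.snoc w ws : Fin (k+1) → _)) := by
            apply Submodule.span_mono _ hn
            rintro y ⟨j, rfl⟩
            exact ⟨j.castSucc, Fin.snoc_castSucc _ _ _⟩
          have h2 : n • ws ∈
              Submodule.span ℤ (Set.range (Fin.snoc w ws : Fin (k+1) → _)) :=
            Submodule.smul_mem _ _ (Submodule.subset_span ⟨Fin.last k, Fin.snoc_last _ _⟩)
          have h3 := Submodule.add_mem _ h1 h2
          rwa [sub_add_cancel] at h3
  -- assemble the basis
  obtain ⟨w, hwli, hwΛ, hwg, hwspan⟩ := KEY d le_rfl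
  have hvid : (v ∘ Fin.castLE (le_refl d)) = v := rfl
  have hvtop : Submodule.span ℝ (Set.range v) = ⊤ := by
    apply Submodule.eq_top_of_finrank_eq
    rw [finrank_span_eq_card hvli, Fintype.card_fin, finrank_euclideanSpace_fin]
  have hLspan : Submodule.span ℤ (Set.range w) = AddSubgroup.toIntSubmodule Λ := by
    rw [hwspan, hvid, hvtop]
    simp
  have hwliZ : LinearIndependent ℤ w :=
    hwli.restrict_scalars (smul_left_injective ℤ (one_ne_zero : (1:ℝ) ≠ 0))
  set wl : Fin d → Λ := fun i => ⟨w i, hwΛ i⟩ with hwl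
  have hcoe : ∀ x : Fin d → ℤ, ((∑ i, x i • wl i : Λ) : EuclideanSpace ℝ (Fin d)) = ∑ i, x i • w i := by
    intro x
    rw [← AddSubgroup.coe_subtype]
    rw [map_sum]
    apply Finset.sum_congr rfl
    intro i _
    rw [map_zsmul]
    rfl
  have hwlli : LinearIndependent ℤ wl := by
    rw [Fintype.linearIndependent_iff]
    intro g hg
    apply Fintype.linearIndependent_iff.1 hwliZ g
    have h2 : ((∑ i, g i • wl i : Λ) : EuclideanSpace ℝ (Fin d)) = ((0 : Λ) : _) :=
      congrArg _ hg
    rw [hcoe g] at h2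
    simpa using h2
  have hwlspan : ⊤ ≤ Submodule.span ℤ (Set.range wl) := by
    intro x _
    have hx : (x : EuclideanSpace ℝ (Fin d)) ∈ Submodule.span ℤ (Set.range w) := by
      rw [hLspan]; exact x.2
    obtain ⟨c, hc⟩ := (mem_span_range_iff_exists_fun ℤ).1 hx
    apply (mem_span_range_iff_exists_fun ℤ).2
    refine ⟨c, ?_⟩
    apply Subtype.ext
    rw [hcoe c]
    exact hc
  refine ⟨Module.Basis.mk hwlli hwlspan, fun i => ?_⟩
  rw [Module.Basis.mk_apply]
  have hpos : 0 < (3/2 : ℝ) ^ (i:ℕ) * m i := mul_pos (by positivity) (hmpos i)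
  apply (hmem_iff hpos).2
  exact hwg i
end
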